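/- arXiv:1703.00752 — 6 statements merged into one kernel-verified Lean document; each statement's English description precedes it below -/
import Mathlib

section
/- Suppose that the measure μ is doubling within the ball B0 = B(x0,r0) with doubling constant C_μ, i.e. μ(2B) ≤ C_μ μ(B) for all balls B ⊆ B0. Then for every δ < 2/3, the ball δB0, regarded as a metric space with the induced metric, is globally doubling, with a doubling constant N depending only on δ and C_μ. -/
open MeasureTheory Metric Set ENNReal NNReal Filter

noncomputable def erealAbsE (x : EReal) : ℝ≥0∞ :=
  if x = ⊤ ∨ x = ⊥ then ⊤ else ENNReal.ofReal |x.toReal|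

def IsUnitSpeedCurve {Y : Type*} [PseudoMetricSpace Y] (γ : ℝ → Y) (l : ℝ) : Prop :=
  0 < l ∧ ContinuousOn γ (Set.Icc 0 l) ∧
    ∀ a b : ℝ, 0 ≤ a → a ≤ b → b ≤ l →
      eVariationOn γ (Set.Icc a b) = ENNReal.ofReal (b - a)

def IsUpperGradient {Y : Type*} [PseudoMetricSpace Y] [MeasurableSpace Y]
    (g : Y → ℝ≥0∞) (f : Y → EReal) : Prop :=
  Measurable g ∧
    ∀ (γ : ℝ → Y) (l : ℝ), IsUnitSpeedCurve γ l →
      erealAbsE (f (γ 0) - f (γ l)) ≤ ∫⁻ t in Set.Icc 0 l, g (γ t) ∂volume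

def DoublingWithin {Y : Type*} [MetricSpace Y] [MeasurableSpace Y]
    (μ : Measure Y) (x0 : Y) (r0 : ℝ) (C : ℝ≥0) : Prop :=
  ∀ (x : Y) (r : ℝ), 0 < r → ball x r ⊆ ball x0 r0 →
    μ (ball x (2 * r)) ≤ (C : ℝ≥0∞) * μ (ball x r)

def BallsPosFinite {Y : Type*} [MetricSpace Y] [MeasurableSpace Y] (μ : Measure Y) : Prop :=
  ∀ (x : Y) (r : ℝ), 0 < r → 0 < μ (ball x r) ∧ μ (ball x r) < ⊤

def PoincareBall {Y : Type*} [MetricSpace Y] [MeasurableSpace Y]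
    (μ : Measure Y) (q p : ℝ) (x : Y) (r : ℝ) (C lam : ℝ) : Prop :=
  ∀ (u : Y → ℝ) (g : Y → ℝ≥0∞),
    IntegrableOn u (ball x (lam * r)) μ →
    IsUpperGradient g (fun y => (u y : EReal)) →
    ((∫⁻ y in ball x r,
        ENNReal.ofReal |u y - ⨍ z in ball x r, u z ∂μ| ^ q ∂μ) / μ (ball x r)) ^ (1/q)
      ≤ ENNReal.ofReal (C * r) *
        ((∫⁻ y in ball x (lam * r), g y ^ p ∂μ) / μ (ball x (lam * r))) ^ (1/p)

def PoincareWithin {Y : Type*} [MetricSpace Y] [MeasurableSpace Y]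
    (μ : Measure Y) (q p : ℝ) (x0 : Y) (r0 : ℝ) (C lam : ℝ) : Prop :=
  ∀ (x : Y) (r : ℝ), 0 < r → ball x r ⊆ ball x0 r0 → PoincareBall μ q p x r C lam

def GloballyDoublingWith (N : ℕ) (Y : Type*) [PseudoMetricSpace Y] : Prop :=
  ∀ (x : Y) (r : ℝ), 0 < r → ∃ s : Finset Y, s.card ≤ N ∧
    ball x r ⊆ ⋃ y ∈ s, ball y (r / 2)

def GloballyDoubling (Y : Type*) [PseudoMetricSpace Y] : Prop :=
  ∃ N : ℕ, GloballyDoublingWith N Y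

noncomputable def newtonianNorm {Y : Type*} [PseudoMetricSpace Y] [MeasurableSpace Y]
    (μ : Measure Y) (p : ℝ) (f : Y → EReal) : ℝ≥0∞ :=
  ((∫⁻ y, erealAbsE (f y) ^ p ∂μ) +
    ⨅ g ∈ {g : Y → ℝ≥0∞ | IsUpperGradient g f}, ∫⁻ y, g y ^ p ∂μ) ^ (1/p)

noncomputable def newtonianNormOn {X : Type*} [MetricSpace X] [MeasurableSpace X]
    (μ : Measure X) (p : ℝ) (E : Set X) (f : X → EReal) : ℝ≥0∞ :=
  newtonianNorm (μ.comap (Subtype.val : E → X)) p (fun y : E => f y)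

def MemN1p {X : Type*} [MetricSpace X] [MeasurableSpace X]
    (μ : Measure X) (p : ℝ) (f : X → EReal) : Prop :=
  Measurable f ∧ newtonianNorm μ p f < ⊤

def MemN1pLoc {X : Type*} [MetricSpace X] [MeasurableSpace X]
    (μ : Measure X) (p : ℝ) (f : X → EReal) : Prop :=
  Measurable f ∧ ∀ x : X, ∃ (c : X) (r : ℝ), 0 < r ∧ x ∈ ball c r ∧
    newtonianNormOn μ p (ball c r) f < ⊤

noncomputable def sobolevCapacity {X : Type*} [MetricSpace X] [MeasurableSpace X]
    (μ : Measure X) (p : ℝ) (E : Set X) : ℝ≥0∞ :=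
  ⨅ u ∈ {u : X → EReal | Measurable u ∧ ∀ x ∈ E, u x = 1},
    newtonianNorm μ p u ^ p

def ConnectsInWithLength {Y : Type*} [PseudoMetricSpace Y]
    (γ : ℝ → Y) (x y : Y) (A : Set Y) (ℓ : ℝ≥0∞) : Prop :=
  ContinuousOn γ (Set.Icc 0 1) ∧ γ 0 = x ∧ γ 1 = y ∧
    (∀ t ∈ Set.Icc (0:ℝ) 1, γ t ∈ A) ∧ eVariationOn γ (Set.Icc 0 1) ≤ ℓ

lemma chain_doubling {X : Type} [MetricSpace X] [MeasurableSpace X]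
    {μ : Measure X} {x0 : X} {r0 : ℝ} {C : ℝ≥0}
    (hd : DoublingWithin μ x0 r0 C) (y : X) {t : ℝ} (ht : 0 < t) (k : ℕ)
    (h : ∀ j < k, ball y (t * 2 ^ j) ⊆ ball x0 r0) :
    μ (ball y (t * 2 ^ k)) ≤ (C : ℝ≥0∞) ^ k * μ (ball y t) := by
  induction k with
  | zero => simp
  | succ k ih =>
    have h1 : μ (ball y (t * 2 ^ (k + 1))) ≤ (C : ℝ≥0∞) * μ (ball y (t * 2 ^ k)) := by
      have := hd y (t * 2 ^ k) (by positivity) (h k (Nat.lt_succ_self k))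
      have he : 2 * (t * 2 ^ k) = t * 2 ^ (k + 1) := by ring
      rwa [he] at this
    calc μ (ball y (t * 2 ^ (k + 1))) ≤ (C : ℝ≥0∞) * μ (ball y (t * 2 ^ k)) := h1
      _ ≤ (C : ℝ≥0∞) * ((C : ℝ≥0∞) ^ k * μ (ball y t)) := by
          gcongr
          exact ih (fun j hj => h j (hj.trans (Nat.lt_succ_self k)))
      _ = (C : ℝ≥0∞) ^ (k + 1) * μ (ball y t) := by ring

lemma card_le_of_separated {X : Type} [MetricSpace X] [MeasurableSpace X] [BorelSpace X]
    (μ : Measure X) {U : Set X} (hU0 : μ U ≠ 0) (hUt : μ U ≠ ⊤)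
    (s : Finset X) {τ : ℝ} (D : ℝ≥0∞)
    (hsub : ∀ y ∈ s, ball y τ ⊆ U)
    (hsep : ∀ y ∈ s, ∀ z ∈ s, y ≠ z → 2 * τ ≤ dist y z)
    (hcomp : ∀ y ∈ s, μ U ≤ D * μ (ball y τ)) :
    (s.card : ℝ≥0∞) ≤ D := by
  have hdisj : (↑s : Set X).PairwiseDisjoint (fun y => ball y τ) := by
    intro y hy z hz hyz
    exact Metric.ball_disjoint_ball (by
      have := hsep y (by simpa using hy) z (by simpa using hz) hyz; linarith)
  have hsum : ∑ y ∈ s, μ (ball y τ) = μ (⋃ y ∈ s, ball y τ) :=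
    (measure_biUnion_finset (μ := μ) hdisj fun y _ => measurableSet_ball).symm
  have h1 : (s.card : ℝ≥0∞) * μ U ≤ D * μ U := by
    calc (s.card : ℝ≥0∞) * μ U = ∑ _y ∈ s, μ U := by
          rw [Finset.sum_const, nsmul_eq_mul]
      _ ≤ ∑ y ∈ s, D * μ (ball y τ) := Finset.sum_le_sum hcomp
      _ = D * ∑ y ∈ s, μ (ball y τ) := by rw [Finset.mul_sum]
      _ = D * μ (⋃ y ∈ s, ball y τ) := by rw [hsum]
      _ ≤ D * μ U := mul_le_mul_right (measure_mono (Set.iUnion₂_subset hsub)) D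
  exact (ENNReal.mul_le_mul_iff_left hU0 hUt).mp h1

lemma exists_maximal_separated {X : Type} [MetricSpace X] (A : Set X) {ρ : ℝ} (hρ : 0 < ρ)
    (N : ℕ)
    (hb : ∀ s : Finset X, ↑s ⊆ A → (∀ y ∈ s, ∀ z ∈ s, y ≠ z → ρ ≤ dist y z) → s.card ≤ N) :
    ∃ s : Finset X, ↑s ⊆ A ∧ (∀ y ∈ s, ∀ z ∈ s, y ≠ z → ρ ≤ dist y z) ∧
      ∀ y ∈ A, ∃ z ∈ s, dist y z < ρ := by
  classical
  by_contra hcon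
  push_neg at hcon
  have key : ∀ n : ℕ, ∃ s : Finset X, ↑s ⊆ A ∧
      (∀ y ∈ s, ∀ z ∈ s, y ≠ z → ρ ≤ dist y z) ∧ n ≤ s.card := by
    intro n
    induction n with
    | zero => exact ⟨∅, by simp, by simp, by simp⟩
    | succ n ih =>
      obtain ⟨s, hsA, hsep, hcard⟩ := ih
      obtain ⟨y, hyA, hy⟩ := hcon s hsA hsep
      have hym : y ∉ s := by
        intro hmem
        have := hy y hmem
        simp only [dist_self] at this
        linarith
      refine ⟨insert y s, ?_, ?_, ?_⟩
      · rw [Finset.coe_insert]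
        exact Set.insert_subset hyA hsA
      · intro a ha b hb' hab
        rcases Finset.mem_insert.mp ha with ha' | ha'
        · rcases Finset.mem_insert.mp hb' with hb'' | hb''
          · exact absurd (ha'.trans hb''.symm) hab
          · rw [ha']; exact hy b hb''
        · rcases Finset.mem_insert.mp hb' with hb'' | hb''
          · rw [hb'', dist_comm]; exact hy a ha'
          · exact hsep a ha' b hb'' hab
      · rw [Finset.card_insert_of_notMem hym]; omega
  obtain ⟨s, h1, h2, h3⟩ := key (N + 1)
  have := hb s h1 h2
  omega

set_option maxHeartbeats 2000000 in
/-- If `μ` is doubling within `B(x0,r0)` with constant `Cμ`, then for every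
`δ < 2/3` the ball `B(x0, δ r0)`, with the induced metric, is globally doubling with a
constant `N` depending only on `δ` and `Cμ`. -/
theorem doubling_within_implies_globally_doubling_subball
    (Cμ : ℝ≥0) (δ : ℝ) (hδ0 : 0 < δ) (hδ : δ < 2 / 3) :
    ∃ N : ℕ, ∀ (X : Type) [MetricSpace X] [MeasurableSpace X] [BorelSpace X]
      (μ : Measure X), BallsPosFinite μ →
      ∀ (x0 : X) (r0 : ℝ), 0 < r0 → DoublingWithin μ x0 r0 Cμ →
        GloballyDoublingWith N ↥(ball x0 (δ * r0)) := by
  have hδ1 : δ < 1 := by linarith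
  have h23 : (0:ℝ) < 2 - 3 * δ := by linarith
  obtain ⟨m, hm2⟩ : ∃ m : ℕ, (1:ℝ) / (2 - 3 * δ) ≤ 2 ^ m := by
    refine ⟨⌈1 / (2 - 3 * δ)⌉₊, ?_⟩
    have h1 := Nat.le_ceil ((1:ℝ) / (2 - 3 * δ))
    have h2 : ((⌈1 / (2 - 3 * δ)⌉₊ : ℕ) : ℝ) ≤ 2 ^ ⌈1 / (2 - 3 * δ)⌉₊ := by
      exact_mod_cast (Nat.lt_two_pow_self).le
    linarith
  set K : ℕ := m + 4 with hKdef
  have h16K : (16:ℝ) ≤ 2 ^ K := by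
    calc (16:ℝ) = 2 ^ 4 := by norm_num
      _ ≤ 2 ^ K := by
          apply pow_le_pow_right₀ one_le_two
          omega
  refine ⟨⌈(Cμ : ℝ≥0) ^ K⌉₊, ?_⟩
  intro X _ _ _ μ hpf x0 r0 hr0 hdb
  intro x r hr
  set r1 : ℝ := (1 - δ) * r0 / 2 with hr1def
  have hr1 : 0 < r1 := by rw [hr1def]; nlinarith
  set ρ : ℝ := min (r / 2) (r1 / 2) with hρdef
  have hρ : 0 < ρ := lt_min (by linarith) (by linarith)
  have hτρ : 0 < ρ / 2 := by linarith
  set A : Set X := ball (x : X) r ∩ ball x0 (δ * r0) with hAdef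
  -- balls centered in δB0 with radius ≤ (1-δ)r0 lie in B0
  have hball_sub : ∀ y : X, dist y x0 < δ * r0 → ∀ R : ℝ, R ≤ (1 - δ) * r0 →
      ball y R ⊆ ball x0 r0 := by
    intro y hy R hR w hw
    rw [mem_ball] at hw ⊢
    have ht := dist_triangle w y x0
    linarith
  -- the uniform cardinality bound for ρ-separated subsets of A
  have hb : ∀ s : Finset X, ↑s ⊆ A →
      (∀ y ∈ s, ∀ z ∈ s, y ≠ z → ρ ≤ dist y z) → s.card ≤ ⌈(Cμ : ℝ≥0) ^ K⌉₊ := by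
    intro s hsA hsep
    have main : (s.card : ℝ≥0∞) ≤ ((Cμ : ℝ≥0∞)) ^ K := by
      rcases le_or_gt r r1 with hcase | hcase
      · -- small radii: compare with ball x (2r)
        have hρeq : ρ = r / 2 := min_eq_left (by linarith)
        have hU := hpf (x : X) (2 * r) (by linarith)
        apply card_le_of_separated μ hU.1.ne' hU.2.ne s ((Cμ : ℝ≥0∞) ^ K)
          (τ := ρ / 2)
        · intro y hy w hw
          obtain ⟨hyx, hyx0⟩ := hsA hy
          rw [mem_ball] at hw hyx ⊢
          have ht := dist_triangle w y (x : X)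
          have : ρ / 2 ≤ r / 2 := by rw [hρeq]; linarith
          linarith
        · intro y hy z hz hyz
          have := hsep y hy z hz hyz
          linarith
        · intro y hy
          obtain ⟨hyx, hyx0⟩ := hsA hy
          rw [mem_ball] at hyx hyx0
          set t : ℝ := 4 * r / 2 ^ K with htdef
          have ht : 0 < t := by positivity
          have htK : t * 2 ^ K = 4 * r := by
            rw [htdef]; field_simp
          have hchain := chain_doubling hdb y ht K ?_
          · rw [htK] at hchain
            have hsub1 : ball (x : X) (2 * r) ⊆ ball y (4 * r) := by
              intro w hw
              rw [mem_ball] at hw ⊢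
              have h1 := dist_triangle w (x : X) y
              have h2 : dist (x : X) y = dist y (x : X) := dist_comm _ _
              linarith
            have hsub2 : ball y t ⊆ ball y (ρ / 2) := by
              apply ball_subset_ball
              rw [htdef, hρeq, div_le_iff₀ (by positivity : (0:ℝ) < 2 ^ K)]
              nlinarith
            calc μ (ball (x : X) (2 * r)) ≤ μ (ball y (4 * r)) := measure_mono hsub1
              _ ≤ (Cμ : ℝ≥0∞) ^ K * μ (ball y t) := hchain
              _ ≤ (Cμ : ℝ≥0∞) ^ K * μ (ball y (ρ / 2)) :=
                  mul_le_mul_right (measure_mono hsub2) _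
          · intro j hj
            apply hball_sub y hyx0
            have h2j : (2:ℝ) * 2 ^ j ≤ 2 ^ K := by
              have h3 : (2:ℝ) ^ (j + 1) ≤ 2 ^ K := pow_le_pow_right₀ one_le_two hj
              rw [pow_succ] at h3
              linarith
            have hle : t * 2 ^ j ≤ 2 * r := by
              rw [htdef, div_mul_eq_mul_div, div_le_iff₀ (by positivity : (0:ℝ) < 2 ^ K)]
              nlinarith [mul_le_mul_of_nonneg_left h2j (by linarith : (0:ℝ) ≤ 2 * r)]
            have : 2 * r ≤ (1 - δ) * r0 := by rw [hr1def] at hcase; linarith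
            linarith
      · -- large radii: compare with ball x0 r0
        have hρeq : ρ = r1 / 2 := min_eq_right (by linarith)
        have hU := hpf x0 r0 hr0
        apply card_le_of_separated μ hU.1.ne' hU.2.ne s ((Cμ : ℝ≥0∞) ^ K)
          (τ := ρ / 2)
        · intro y hy w hw
          obtain ⟨hyx, hyx0⟩ := hsA hy
          rw [mem_ball] at hw hyx0 ⊢
          have ht := dist_triangle w y x0
          have h1 : ρ / 2 = (1 - δ) * r0 / 8 := by rw [hρeq, hr1def]; ring
          nlinarith
        · intro y hy z hz hyz
          have := hsep y hy z hz hyz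
          linarith
        · intro y hy
          obtain ⟨hyx, hyx0⟩ := hsA hy
          rw [mem_ball] at hyx hyx0
          have hρ8 : ρ / 2 = (1 - δ) * r0 / 8 := by rw [hρeq, hr1def]; ring
          -- first chain at y, 4 steps
          have hchain1 := chain_doubling hdb y hτρ 4 ?_
          · -- second chain at x0, m steps
            have ht2 : (0:ℝ) < r0 / 2 ^ m := by positivity
            have hchain2 := chain_doubling hdb x0 ht2 m ?_
            · have ht2K : r0 / 2 ^ m * 2 ^ m = r0 := by field_simp
              rw [ht2K] at hchain2
              have hsubc : ball x0 (r0 / 2 ^ m) ⊆ ball y (ρ / 2 * 2 ^ 4) := by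
                intro w hw
                rw [mem_ball] at hw ⊢
                have htr := dist_triangle w x0 y
                have hcomm : dist x0 y = dist y x0 := dist_comm _ _
                have hsmall : r0 / 2 ^ m ≤ (2 - 3 * δ) * r0 := by
                  rw [div_le_iff₀ (by positivity : (0:ℝ) < 2 ^ m)]
                  rw [div_le_iff₀ h23] at hm2
                  nlinarith
                have he : ρ / 2 * 2 ^ 4 = 2 * (1 - δ) * r0 := by rw [hρ8]; ring
                rw [he]
                nlinarith
              calc μ (ball x0 r0) ≤ (Cμ : ℝ≥0∞) ^ m * μ (ball x0 (r0 / 2 ^ m)) := hchain2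
                _ ≤ (Cμ : ℝ≥0∞) ^ m * μ (ball y (ρ / 2 * 2 ^ 4)) :=
                    mul_le_mul_right (measure_mono hsubc) _
                _ ≤ (Cμ : ℝ≥0∞) ^ m * ((Cμ : ℝ≥0∞) ^ 4 * μ (ball y (ρ / 2))) :=
                    mul_le_mul_right hchain1 _
                _ = (Cμ : ℝ≥0∞) ^ K * μ (ball y (ρ / 2)) := by
                    rw [hKdef, pow_add, mul_assoc]
            · intro j hj
              apply ball_subset_ball
              have h2j : (2:ℝ) ^ j ≤ 2 ^ m := pow_le_pow_right₀ one_le_two hj.le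
              rw [div_mul_eq_mul_div, div_le_iff₀ (by positivity : (0:ℝ) < 2 ^ m)]
              nlinarith
          · intro j hj
            apply hball_sub y hyx0
            have h2j : (2:ℝ) ^ j ≤ 2 ^ 3 := pow_le_pow_right₀ one_le_two (by omega)
            rw [hρ8]
            nlinarith
    have main' : (s.card : ℝ≥0) ≤ Cμ ^ K := by
      rw [← ENNReal.coe_pow, ← ENNReal.coe_natCast, ENNReal.coe_le_coe] at main
      exact main
    exact_mod_cast main'.trans (Nat.le_ceil _)
  obtain ⟨S, hSA, hSsep, hScov⟩ := exists_maximal_separated A hρ _ hb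
  refine ⟨S.attach.map ⟨fun y => (⟨y.1, (hSA y.2).2⟩ : ↥(ball x0 (δ * r0))),
    fun a b h => Subtype.ext (by have := congrArg Subtype.val h; exact this)⟩, ?_, ?_⟩
  · rw [Finset.card_map, Finset.card_attach]
    exact hb S hSA hSsep
  · intro w hw
    rw [mem_ball, Subtype.dist_eq] at hw
    have hwA : (w : X) ∈ A := ⟨mem_ball.mpr hw, w.2⟩
    obtain ⟨z, hzS, hzd⟩ := hScov _ hwA
    refine mem_iUnion₂.mpr ⟨⟨z, (hSA hzS).2⟩, ?_, ?_⟩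
    · exact Finset.mem_map.mpr ⟨⟨z, hzS⟩, Finset.mem_attach _ _, rfl⟩
    · rw [mem_ball, Subtype.dist_eq]
      have hρle : ρ ≤ r / 2 := min_le_left _ _
      exact lt_of_lt_of_le hzd hρle
end

section
/- Assume that the metric space X is semilocally doubling. Then X is proper if and only if X is complete. -/
open MeasureTheory Metric Set ENNReal NNReal Filter

theorem tb_of_gd {Y : Type*} [PseudoMetricSpace Y] [DecidableEq Y] (hd : GloballyDoubling Y)
    (y : Y) (r : ℝ) : TotallyBounded (ball y r) := by
  obtain ⟨N, hN⟩ := hd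
  rcases le_or_gt r 0 with hr | hr
  · simp [ball_eq_empty.2 hr, totallyBounded_empty]
  · -- claim: for every k, cover by balls of radius r / 2^k
    have key : ∀ k : ℕ, ∃ s : Finset Y, ball y r ⊆ ⋃ z ∈ s, ball z (r / 2 ^ k) := by
      intro k
      induction k with
      | zero => exact ⟨{y}, by simp⟩
      | succ k ih =>
        obtain ⟨s, hs⟩ := ih
        have hpos : (0:ℝ) < r / 2 ^ k := by positivity
        choose t ht hcov using fun z : Y => hN z (r / 2 ^ k) hpos
        refine ⟨s.biUnion t, ?_⟩
        intro p hp
        obtain ⟨z, hz, hpz⟩ := by simpa using hs hp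
        have := hcov z hpz
        obtain ⟨w, hw, hpw⟩ := by simpa using this
        have : r / 2 ^ k / 2 = r / 2 ^ (k + 1) := by ring
        simp only [mem_iUnion, Finset.mem_biUnion]
        exact ⟨w, ⟨z, hz, hw⟩, by rwa [← this]⟩
    rw [Metric.totallyBounded_iff]
    intro ε hε
    obtain ⟨k, hk⟩ := exists_pow_lt_of_lt_one (div_pos hε (by positivity) : 0 < ε / r)
      (by norm_num : (1:ℝ)/2 < 1)
    obtain ⟨s, hs⟩ := key k
    refine ⟨s, s.finite_toSet, hs.trans ?_⟩
    apply iUnion₂_mono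
    intro z _
    apply ball_subset_ball
    have : r / 2 ^ k = r * (1/2) ^ k := by
      rw [div_eq_mul_inv, one_div, inv_pow]
    rw [this]
    calc r * (1/2:ℝ) ^ k ≤ r * (ε / r) := by
          exact mul_le_mul_of_nonneg_left hk.le hr.le
      _ = ε := by field_simp


/-- If the metric space `X` is semilocally doubling (every ball, with the
induced metric, is globally doubling), then `X` is proper if and only if it is complete. -/
theorem proper_iff_complete_of_semilocally_doubling
    {X : Type*} [MetricSpace X]
    (h : ∀ (x : X) (r : ℝ), 0 < r → GloballyDoubling ↥(ball x r)) :
    ProperSpace X ↔ CompleteSpace X := by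
  constructor
  · intro _; infer_instance
  · intro hc
    have tb : ∀ (x : X) (r : ℝ), 0 < r → TotallyBounded (ball x r) := by
      intro x r hr
      have hd := h x r hr
      have : TotallyBounded (univ : Set ↥(ball x r)) := by
        have : (univ : Set ↥(ball x r)) ⊆ ball (⟨x, mem_ball_self hr⟩ : ↥(ball x r)) r := by
          intro p _
          rw [mem_ball, Subtype.dist_eq]; exact p.2
        classical
        exact (tb_of_gd hd _ r).subset this
      have := this.image uniformContinuous_subtype_val
      simpa [Set.image_univ, Subtype.range_coe, Metric.ball] using this
    refine ⟨fun x r => ?_⟩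
    rcases le_or_gt r 0 with hr | hr
    · rcases lt_or_eq_of_le hr with hr' | hr'
      · simp [closedBall_eq_empty.2 hr', isCompact_empty]
      · simp [hr', closedBall_zero]
    · apply TotallyBounded.isCompact_of_isClosed
      · exact (tb x (r+1) (by linarith)).subset
          (closedBall_subset_ball (by linarith))
      · exact Metric.isClosed_closedBall
end

section
/- If X is proper and the metric space X is locally doubling, then X is semilocally doubling, i.e. every ball in X, with the induced metric, is globally doubling. -/
open MeasureTheory Metric Set ENNReal NNReal Filter

lemma keycover {X : Type*} [MetricSpace X] [ProperSpace X]
    (h : ∀ x : X, ∃ r : ℝ, 0 < r ∧ GloballyDoubling ↥(ball x r))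
    (x : X) (r : ℝ) (hr : 0 < r) :
    ∃ N : ℕ, ∀ (y : X) (s : ℝ), 0 < s → y ∈ ball x r →
      ∃ t : Finset X, t.card ≤ N ∧ (∀ c ∈ t, c ∈ ball x r) ∧
        ball y s ∩ ball x r ⊆ ⋃ c ∈ t, ball c (s / 2) := by
  classical
  choose ρ hρpos hdbl using h
  choose Nf hNf using hdbl
  have hK : IsCompact (closedBall x r) := isCompact_closedBall x r
  -- first finite subcover
  obtain ⟨b, hbsub, hbfin, hbcov⟩ := hK.elim_finite_subcover_image
    (fun z _ => isOpen_ball (x := z) (ε := ρ z / 4))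
    (fun z hz => mem_iUnion₂.2 ⟨z, hz, mem_ball_self (by linarith [hρpos z])⟩)
  set u : Finset X := hbfin.toFinset with hu
  have hucov : closedBall x r ⊆ ⋃ z ∈ u, ball z (ρ z / 4) := by
    simpa [hu, Set.Finite.mem_toFinset] using hbcov
  have hune : u.Nonempty := by
    have hx : x ∈ closedBall x r := mem_closedBall_self hr.le
    obtain ⟨z, hz, -⟩ := mem_iUnion₂.1 (hucov hx)
    exact ⟨z, hz⟩
  set δ : ℝ := u.inf' hune (fun z => ρ z / 4) with hδ
  have hδpos : 0 < δ := by
    rw [hδ, Finset.lt_inf'_iff]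
    exact fun z _ => by linarith [hρpos z]
  have hδle : ∀ z ∈ u, δ ≤ ρ z / 4 := fun z hz => Finset.inf'_le _ hz
  set Nmax : ℕ := u.sup Nf with hNmax
  -- second finite subcover at scale δ/4
  obtain ⟨c, hcsub, hcfin, hccov⟩ := hK.elim_finite_subcover_image
    (fun z _ => isOpen_ball (x := z) (ε := δ / 4))
    (fun z hz => mem_iUnion₂.2 ⟨z, hz, mem_ball_self (by linarith)⟩)
  set v : Finset X := hcfin.toFinset with hv
  have hvcov : closedBall x r ⊆ ⋃ z ∈ v, ball z (δ / 4) := by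
    simpa [hv, Set.Finite.mem_toFinset] using hccov
  -- recentering at scale δ
  have hxball : x ∈ ball x r := mem_ball_self hr
  set pickδ : X → X := fun p =>
    if hp : (ball p (δ / 4) ∩ ball x r).Nonempty then hp.choose else x with hpickδ
  have hpickδ_mem : ∀ p, pickδ p ∈ ball x r := by
    intro p
    rw [hpickδ]
    by_cases hp : (ball p (δ / 4) ∩ ball x r).Nonempty
    · simpa [hp] using hp.choose_spec.2
    · simpa [hp] using hxball
  have hpickδ_close : ∀ p w, w ∈ ball p (δ / 4) → w ∈ ball x r →
      dist w (pickδ p) < δ / 2 := by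
    intro p w hw hw'
    have hp : (ball p (δ / 4) ∩ ball x r).Nonempty := ⟨w, hw, hw'⟩
    have hc := hp.choose_spec.1
    simp only [hpickδ, dif_pos hp]
    have h1 : dist w p < δ / 4 := mem_ball.1 hw
    have h2 : dist hp.choose p < δ / 4 := mem_ball.1 hc
    calc dist w hp.choose ≤ dist w p + dist p hp.choose := dist_triangle _ _ _
      _ < δ / 4 + δ / 4 := by rw [dist_comm p]; linarith
      _ = δ / 2 := by ring
  refine ⟨max (Nmax * Nmax) (v.image pickδ).card, fun y s hs hy => ?_⟩
  by_cases hsδ : s ≤ δ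
  · -- small scale: use local doubling twice
    have hyK : y ∈ closedBall x r := ball_subset_closedBall hy
    obtain ⟨z, hzu, hyz⟩ := mem_iUnion₂.1 (hucov hyK)
    have hρz := hρpos z
    have hδz := hδle z hzu
    have hyz' : dist y z < ρ z := by
      have := mem_ball.1 hyz; linarith
    set Yz := ↥(ball z (ρ z))
    set y' : Yz := ⟨y, mem_ball.2 hyz'⟩ with hy'
    obtain ⟨S1, hS1card, hS1cov⟩ := hNf z y' s hs
    choose S2 hS2card hS2cov using fun c : Yz => hNf z c (s / 2) (by linarith)
    set Sfin : Finset Yz := S1.biUnion S2 with hSfin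
    set pick : X → X := fun p =>
      if hp : (ball p (s / 4) ∩ ball x r).Nonempty then hp.choose else x with hpick
    have hpick_mem : ∀ p, pick p ∈ ball x r := by
      intro p
      rw [hpick]
      by_cases hp : (ball p (s / 4) ∩ ball x r).Nonempty
      · simpa [hp] using hp.choose_spec.2
      · simpa [hp] using hxball
    have hpick_close : ∀ p w, w ∈ ball p (s / 4) → w ∈ ball x r →
        dist w (pick p) < s / 2 := by
      intro p w hw hw'
      have hp : (ball p (s / 4) ∩ ball x r).Nonempty := ⟨w, hw, hw'⟩
      have hc := hp.choose_spec.1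
      simp only [hpick, dif_pos hp]
      have h1 : dist w p < s / 4 := mem_ball.1 hw
      have h2 : dist hp.choose p < s / 4 := mem_ball.1 hc
      calc dist w hp.choose ≤ dist w p + dist p hp.choose := dist_triangle _ _ _
        _ < s / 4 + s / 4 := by rw [dist_comm p]; linarith
        _ = s / 2 := by ring
    refine ⟨(Sfin.image Subtype.val).image pick, ?_, ?_, ?_⟩
    · refine le_trans (Finset.card_image_le.trans (Finset.card_image_le.trans ?_))
        (le_max_left _ _)
      calc Sfin.card ≤ ∑ c ∈ S1, (S2 c).card := Finset.card_biUnion_le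
        _ ≤ S1.card * Nf z := by
            refine le_trans (Finset.sum_le_card_nsmul _ _ (Nf z)
              (fun c _ => hS2card c)) (by simp)
        _ ≤ Nmax * Nmax := by
            have : Nf z ≤ Nmax := Finset.le_sup hzu
            exact Nat.mul_le_mul (hS1card.trans this) this
    · intro p hp
      simp only [Finset.mem_image] at hp
      obtain ⟨q, -, rfl⟩ := hp
      exact hpick_mem q
    · intro w hw
      obtain ⟨hws, hwx⟩ := hw
      have hwz : dist w z < ρ z := by
        have h1 : dist w y < s := mem_ball.1 hws
        have h2 : dist y z < ρ z / 4 := mem_ball.1 hyz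
        calc dist w z ≤ dist w y + dist y z := dist_triangle _ _ _
          _ < ρ z := by linarith
      set w' : Yz := ⟨w, mem_ball.2 hwz⟩ with hw'
      have hw'ball : w' ∈ ball y' s := by
        rw [mem_ball, Subtype.dist_eq]
        exact mem_ball.1 hws
      obtain ⟨c, hc, hwc⟩ := mem_iUnion₂.1 (hS1cov hw'ball)
      obtain ⟨d, hd, hwd⟩ := mem_iUnion₂.1 (hS2cov c hwc)
      have hwdX : dist w (d : X) < s / 4 := by
        have := mem_ball.1 hwd
        rw [Subtype.dist_eq] at this
        linarith
      have hdin : d ∈ Sfin := Finset.mem_biUnion.2 ⟨c, hc, hd⟩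
      refine mem_iUnion₂.2 ⟨pick (d : X), ?_, ?_⟩
      · exact Finset.mem_image.2 ⟨(d : X), Finset.mem_image.2 ⟨d, hdin, rfl⟩, rfl⟩
      · exact mem_ball.2 (hpick_close (d : X) w (mem_ball.2 hwdX) hwx)
  · -- large scale: use the fixed δ/4-net
    push_neg at hsδ
    refine ⟨v.image pickδ, le_max_right _ _, ?_, ?_⟩
    · intro p hp
      simp only [Finset.mem_image] at hp
      obtain ⟨q, -, rfl⟩ := hp
      exact hpickδ_mem q
    · intro w hw
      obtain ⟨-, hwx⟩ := hw
      have hwK : w ∈ closedBall x r := ball_subset_closedBall hwx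
      obtain ⟨p, hpv, hwp⟩ := mem_iUnion₂.1 (hvcov hwK)
      refine mem_iUnion₂.2 ⟨pickδ p, Finset.mem_image.2 ⟨p, hpv, rfl⟩, ?_⟩
      have := hpickδ_close p w hwp hwx
      exact mem_ball.2 (by linarith)

/-- If `X` is proper and locally doubling, then `X` is semilocally doubling,
i.e. every ball in `X`, with the induced metric, is globally doubling. -/
theorem semilocally_doubling_of_locally_doubling_of_proper
    {X : Type*} [MetricSpace X] [ProperSpace X]
    (h : ∀ x : X, ∃ r : ℝ, 0 < r ∧ GloballyDoubling ↥(ball x r)) :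
    ∀ (x : X) (r : ℝ), 0 < r → GloballyDoubling ↥(ball x r) := by
  classical
  intro x r hr
  obtain ⟨N, hN⟩ := keycover h x r hr
  refine ⟨N, fun y s hs => ?_⟩
  obtain ⟨t, htc, htm, htcov⟩ := hN (y : X) s hs y.2
  refine ⟨t.attach.image (fun c => (⟨c.1, htm c.1 c.2⟩ : ↥(ball x r))), ?_, ?_⟩
  · exact Finset.card_image_le.trans (by simpa using htc)
  · intro w hw
    have hw1 : (w : X) ∈ ball (y : X) s := by
      rw [mem_ball] at hw ⊢
      rw [Subtype.dist_eq] at hw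
      exact hw
    obtain ⟨c, hc, hwc⟩ := mem_iUnion₂.1 (htcov ⟨hw1, w.2⟩)
    refine mem_iUnion₂.2 ⟨⟨c, htm c hc⟩, ?_, ?_⟩
    · exact Finset.mem_image.2 ⟨⟨c, hc⟩, Finset.mem_attach _ _, rfl⟩
    · rw [mem_ball, Subtype.dist_eq]
      exact mem_ball.1 hwc
end

section
/- Let x, y ∈ X with x ≠ y and set B0 = B(x, 2 d(x,y)). Assume that the p-Poincaré inequality holds within B0 with constant C_PI (and some dilation constant λ ≥ 1) and that μ is doubling within B0 with constant C_μ. Let Λ = 3 C_μ^3 C_PI. If the closure of ΛB0 is compact, then x and y can be connected by a curve lying in the closure of ΛB0 of length at most L d(x,y), where L = 9Λ. -/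
open MeasureTheory Metric Set ENNReal NNReal Filter

namespace CCLP

variable {X : Type*} [MetricSpace X]

/-- Infimal length of `ε`-chains from `x` to `z`. -/
noncomputable def chainDistE (ε : ℝ) (x z : X) : ℝ≥0∞ :=
  ⨅ (n : ℕ) (w : ℕ → X) (_ : w 0 = x ∧ w n = z ∧ ∀ i < n, dist (w i) (w (i+1)) < ε),
    ENNReal.ofReal (∑ i ∈ Finset.range n, dist (w i) (w (i+1)))

lemma chainDistE_le {ε : ℝ} {x z : X} (n : ℕ) (w : ℕ → X)
    (h : w 0 = x ∧ w n = z ∧ ∀ i < n, dist (w i) (w (i+1)) < ε) :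
    chainDistE ε x z ≤ ENNReal.ofReal (∑ i ∈ Finset.range n, dist (w i) (w (i+1))) := by
  exact iInf_le_of_le n (iInf_le_of_le w (iInf_le_of_le h le_rfl))

lemma chainDistE_self (ε : ℝ) (x : X) : chainDistE ε x x = 0 := by
  have := chainDistE_le (ε := ε) (x := x) (z := x) 0 (fun _ => x)
    ⟨rfl, rfl, by intro i hi; omega⟩
  simpa using this

lemma chainDistE_le_add {ε : ℝ} {x a b : X} (hd : dist a b < ε) :
    chainDistE ε x b ≤ chainDistE ε x a + ENNReal.ofReal (dist a b) := by
  have hrw : chainDistE ε x a + ENNReal.ofReal (dist a b)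
      = ⨅ (n : ℕ) (w : ℕ → X) (_ : w 0 = x ∧ w n = a ∧ ∀ i < n, dist (w i) (w (i+1)) < ε),
        (ENNReal.ofReal (∑ i ∈ Finset.range n, dist (w i) (w (i+1)))
          + ENNReal.ofReal (dist a b)) := by
    rw [chainDistE]; simp only [ENNReal.iInf_add]
  rw [hrw]
  refine le_iInf fun n => le_iInf fun w => le_iInf fun h => ?_
  obtain ⟨h0, hn, hlink⟩ := h
  set w' : ℕ → X := fun i => if i = n + 1 then b else w i with hw'
  have he : ∀ i, i ≠ n + 1 → w' i = w i := fun i hi => if_neg hi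
  have he2 : w' (n+1) = b := if_pos rfl
  have hterm : ∀ i < n, dist (w' i) (w' (i+1)) = dist (w i) (w (i+1)) := by
    intro i hi
    rw [he i (by omega), he (i+1) (by omega)]
  have hlast : dist (w' n) (w' (n+1)) = dist a b := by
    rw [he n (by omega), he2, hn]
  have hl : ∀ i < n + 1, dist (w' i) (w' (i+1)) < ε := by
    intro i hi
    rcases Nat.lt_or_ge i n with h' | h'
    · rw [hterm i h']; exact hlink i h'
    · have : i = n := by omega
      subst this
      rw [hlast]; exact hd
  have := chainDistE_le (ε := ε) (x := x) (z := b) (n+1) w'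
    ⟨by rw [he 0 (by omega)]; exact h0, he2, hl⟩
  refine this.trans (le_of_eq ?_)
  rw [Finset.sum_range_succ]
  rw [Finset.sum_congr rfl (fun i hi => hterm i (Finset.mem_range.mp hi))]
  rw [hlast, ENNReal.ofReal_add (Finset.sum_nonneg fun i _ => dist_nonneg) dist_nonneg]

lemma chainDistE_le_dist {ε : ℝ} {x z : X} (h : dist x z < ε) :
    chainDistE ε x z ≤ ENNReal.ofReal (dist x z) := by
  have := chainDistE_le_add (ε := ε) (x := x) (a := x) (b := z) h
  simpa [chainDistE_self] using this

/-- Truncated chain distance, real valued. -/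
noncomputable def ucap (ε : ℝ) (x : X) (M : ℝ) (z : X) : ℝ :=
  (min (chainDistE ε x z) (ENNReal.ofReal M)).toReal

lemma ucap_nonneg (ε : ℝ) (x : X) (M : ℝ) (z : X) : 0 ≤ ucap ε x M z :=
  ENNReal.toReal_nonneg

lemma ucap_le (ε : ℝ) (x : X) {M : ℝ} (hM : 0 ≤ M) (z : X) : ucap ε x M z ≤ M := by
  have : min (chainDistE ε x z) (ENNReal.ofReal M) ≤ ENNReal.ofReal M := min_le_right _ _
  calc ucap ε x M z ≤ (ENNReal.ofReal M).toReal :=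
        ENNReal.toReal_mono ENNReal.ofReal_ne_top this
    _ = M := ENNReal.toReal_ofReal hM

lemma ucap_self (ε : ℝ) (x : X) (M : ℝ) : ucap ε x M x = 0 := by
  simp [ucap, chainDistE_self]

lemma ucap_ne_top {ε : ℝ} {x : X} {M : ℝ} {z : X} :
    min (chainDistE ε x z) (ENNReal.ofReal M) ≠ ⊤ :=
  ne_top_of_le_ne_top ENNReal.ofReal_ne_top (min_le_right _ _)

lemma ucap_sub_le {ε : ℝ} {x : X} {M : ℝ} {a b : X} (hd : dist a b < ε) :
    ucap ε x M b ≤ ucap ε x M a + dist a b := by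
  have h1 : min (chainDistE ε x b) (ENNReal.ofReal M)
      ≤ min (chainDistE ε x a) (ENNReal.ofReal M) + ENNReal.ofReal (dist a b) := by
    rcases le_total (chainDistE ε x a) (ENNReal.ofReal M) with h | h
    · rw [min_eq_left h]
      exact le_trans (min_le_left _ _) (chainDistE_le_add hd)
    · rw [min_eq_right h]
      exact le_trans (min_le_right _ _) (le_add_right le_rfl)
  have := ENNReal.toReal_mono (by
      exact ENNReal.add_ne_top.mpr ⟨ucap_ne_top, ENNReal.ofReal_ne_top⟩) h1
  rw [ENNReal.toReal_add ucap_ne_top ENNReal.ofReal_ne_top,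
    ENNReal.toReal_ofReal dist_nonneg] at this
  exact this

lemma abs_ucap_sub_le {ε : ℝ} {x : X} {M : ℝ} {a b : X} (hd : dist a b < ε) :
    |ucap ε x M a - ucap ε x M b| ≤ dist a b := by
  rw [abs_sub_le_iff]
  constructor
  · have := ucap_sub_le (ε := ε) (x := x) (M := M) (a := b) (b := a) (by rwa [dist_comm])
    rw [dist_comm] at this; linarith
  · have := ucap_sub_le (ε := ε) (x := x) (M := M) hd
    linarith

lemma continuous_ucap {ε : ℝ} (hε : 0 < ε) (x : X) (M : ℝ) :
    Continuous (ucap ε x M) := by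
  rw [Metric.continuous_iff]
  intro b δ hδ
  refine ⟨min ε δ, lt_min hε hδ, fun a ha => ?_⟩
  have hd : dist a b < ε := lt_of_lt_of_le ha (min_le_left _ _)
  calc dist (ucap ε x M a) (ucap ε x M b) = |ucap ε x M a - ucap ε x M b| := Real.dist_eq _ _
    _ ≤ dist a b := abs_ucap_sub_le hd
    _ < δ := lt_of_lt_of_le ha (min_le_right _ _)


lemma erealAbsE_coe_sub (r s : ℝ) : erealAbsE ((r : EReal) - (s : EReal)) = ENNReal.ofReal |r - s| := by
  have h : ((r:EReal) - (s:EReal)) = (((r - s : ℝ)) : EReal) := (EReal.coe_sub r s).symm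
  rw [h, erealAbsE, if_neg (not_or.mpr ⟨EReal.coe_ne_top _, EReal.coe_ne_bot _⟩),
    EReal.toReal_coe]

variable {X : Type*} [MetricSpace X]

/-- Any 1-Lipschitz-along-short-scales function has constant 1 as upper gradient. -/
lemma upperGradient_one [MeasurableSpace X] {u : X → ℝ} {ε : ℝ} (hε : 0 < ε)
    (hu : ∀ a b : X, dist a b < ε → |u a - u b| ≤ dist a b) :
    IsUpperGradient (fun _ : X => (1 : ℝ≥0∞)) (fun z => ((u z : ℝ) : EReal)) := by
  refine ⟨measurable_const, ?_⟩
  intro γ l hγ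
  obtain ⟨hl, hcont, hvar⟩ := hγ
  rw [erealAbsE_coe_sub]
  have hR : ∫⁻ t in Set.Icc 0 l, (1:ℝ≥0∞) ∂volume = ENNReal.ofReal l := by
    rw [setLIntegral_one, Real.volume_Icc, sub_zero]
  rw [hR]
  refine ENNReal.ofReal_le_ofReal ?_
  -- pick N with l / N < ε
  obtain ⟨N, hN⟩ := exists_nat_gt (l / ε)
  have hN0 : 0 < (N:ℝ) := lt_of_le_of_lt (div_nonneg hl.le hε.le) hN
  have hNnat : 0 < N := by exact_mod_cast hN0
  have hstep : 0 < l / N := div_pos hl hN0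
  have hstepε : l / N < ε := by
    rw [div_lt_iff₀ hN0]
    calc l = (l / ε) * ε := by field_simp
    _ < ↑N * ε := mul_lt_mul_of_pos_right hN hε
    _ = ε * ↑N := mul_comm _ _
  set f : ℕ → X := fun k => γ (k * (l / N)) with hf
  have hdist : ∀ k < N, dist (f k) (f (k+1)) ≤ l / N := by
    intro k hk
    have h0 : (0:ℝ) ≤ k * (l/N) := by positivity
    have h1 : (k:ℝ) * (l/N) ≤ (k+1) * (l/N) := by nlinarith
    have h2 : ((k:ℝ)+1) * (l/N) ≤ l := by
      have : ((k:ℝ)+1) ≤ N := by exact_mod_cast hk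
      calc ((k:ℝ)+1) * (l/N) ≤ N * (l/N) := by nlinarith
      _ = l := by field_simp
    have hv := hvar (k * (l/N)) ((k+1) * (l/N)) h0 h1 h2
    have := eVariationOn.edist_le γ
      (Set.mem_Icc.mpr ⟨le_rfl, h1⟩)
      (Set.mem_Icc.mpr ⟨h1, le_rfl⟩) (s := Set.Icc ((k:ℝ) * (l/N)) (((k:ℝ)+1) * (l/N)))
    rw [hv] at this
    have ht := ENNReal.toReal_mono ENNReal.ofReal_ne_top this
    rw [ENNReal.toReal_ofReal (by nlinarith), ← dist_edist] at ht
    calc dist (f k) (f (k+1)) = dist (γ ((k:ℝ) * (l/N))) (γ (((k:ℝ)+1) * (l/N))) := by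
          simp only [hf]; push_cast; ring_nf
    _ ≤ ((k:ℝ)+1) * (l/N) - (k:ℝ) * (l/N) := ht
    _ = l / N := by ring
  have key : dist (u (f 0)) (u (f N)) ≤ l := by
    calc dist (u (f 0)) (u (f N))
        ≤ ∑ i ∈ Finset.range N, dist (u (f i)) (u (f (i+1))) :=
          dist_le_range_sum_dist (fun k => u (f k)) N
    _ ≤ ∑ i ∈ Finset.range N, l / N := by
          refine Finset.sum_le_sum fun i hi => ?_
          have hi' := Finset.mem_range.mp hi
          rw [Real.dist_eq]
          exact le_trans (hu _ _ (lt_of_le_of_lt (hdist i hi') hstepε)) (hdist i hi')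
    _ = l := by
          rw [Finset.sum_const, Finset.card_range, nsmul_eq_mul]
          field_simp
  have e0 : f 0 = γ 0 := by simp [hf]
  have eN : f N = γ l := by
    have : (N:ℝ) * (l/N) = l := by field_simp
    simp [hf, this]
  rw [e0, eN, Real.dist_eq] at key
  exact key


variable {X : Type*} [MetricSpace X] [MeasurableSpace X] [BorelSpace X]

lemma integrableOn_of_bounded' {μ : Measure X} {u : X → ℝ} (hu : Continuous u)
    {M : ℝ} (hub : ∀ z, |u z| ≤ M) {s : Set X} (hs : μ s < ⊤) :
    IntegrableOn u s μ := by
  refine Integrable.mono' (g := fun _ => M)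
    ((integrableOn_const (C := M) hs.ne)) hu.aestronglyMeasurable.restrict ?_
  exact ae_of_all _ (fun z => by simpa [Real.norm_eq_abs] using hub z)

lemma PI_L1 {μ : Measure X} (hμ : BallsPosFinite μ) {p : ℝ} (hp : 1 ≤ p)
    {x0 : X} {r0 : ℝ} {CPI lam : ℝ} (hCPI : 0 < CPI) (hlam : 1 ≤ lam)
    (hPI : PoincareWithin μ 1 p x0 r0 CPI lam)
    {u : X → ℝ} (hu : Continuous u) {M : ℝ} (hub : ∀ z, |u z| ≤ M)
    (hug : IsUpperGradient (fun _ : X => (1:ℝ≥0∞)) (fun z => ((u z : ℝ) : EReal)))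
    {c : X} {r : ℝ} (hr : 0 < r) (hsub : ball c r ⊆ ball x0 r0) :
    ∫ z in ball c r, |u z - ⨍ w in ball c r, u w ∂μ| ∂μ ≤ CPI * r * (μ (ball c r)).toReal := by
  have hlr : 0 < lam * r := mul_pos (lt_of_lt_of_le one_pos hlam) hr
  have hfinL := (hμ c (lam * r) hlr).2
  have hposL := (hμ c (lam * r) hlr).1
  have hfin := (hμ c r hr).2
  have hpos := (hμ c r hr).1
  have hintL : IntegrableOn u (ball c (lam * r)) μ := integrableOn_of_bounded' hu hub hfinL
  have hPoinc := hPI c r hr hsub u (fun _ => 1) hintL hug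
  rw [show (1:ℝ)/1 = 1 by norm_num] at hPoinc
  simp only [ENNReal.rpow_one, ENNReal.one_rpow, setLIntegral_one,
    ENNReal.div_self hposL.ne' hfinL.ne, mul_one] at hPoinc
  have hPoinc2 : (∫⁻ z in ball c r,
      ENNReal.ofReal |u z - ⨍ w in ball c r, u w ∂μ| ∂μ)
      ≤ ENNReal.ofReal (CPI * r) * μ (ball c r) :=
    (ENNReal.div_le_iff_le_mul (Or.inl hpos.ne') (Or.inl hfin.ne)).mp hPoinc
  have hint : IntegrableOn (fun z => |u z - ⨍ w in ball c r, u w ∂μ|) (ball c r) μ :=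
    ((integrableOn_of_bounded' hu hub hfin).sub
      ((integrableOn_const (C := ⨍ w in ball c r, u w ∂μ) hfin.ne))).abs
  have hofReal : ENNReal.ofReal (∫ z in ball c r, |u z - ⨍ w in ball c r, u w ∂μ| ∂μ)
      = ∫⁻ z in ball c r, ENNReal.ofReal |u z - ⨍ w in ball c r, u w ∂μ| ∂μ :=
    ofReal_integral_eq_lintegral_ofReal hint (ae_of_all _ (fun z => abs_nonneg _))
  rw [← hofReal] at hPoinc2
  have hCr : 0 ≤ CPI * r := by positivity
  rw [show ENNReal.ofReal (CPI * r) * μ (ball c r)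
      = ENNReal.ofReal (CPI * r * (μ (ball c r)).toReal) by
    rw [ENNReal.ofReal_mul hCr, ENNReal.ofReal_toReal hfin.ne]] at hPoinc2
  exact (ENNReal.ofReal_le_ofReal_iff (by positivity)).mp hPoinc2

lemma avg_diff_le {μ : Measure X} {u : X → ℝ} (hu : Continuous u) {M : ℝ}
    (hub : ∀ z, |u z| ≤ M) {c c' : X} {r r' : ℝ}
    (hpos' : 0 < μ (ball c' r')) (hfin : μ (ball c r) < ⊤)
    (hss : ball c' r' ⊆ ball c r)
    {K : ℝ} (hK : ∫ z in ball c r, |u z - ⨍ w in ball c r, u w ∂μ| ∂μ ≤ K) :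
    |(⨍ w in ball c' r', u w ∂μ) - ⨍ w in ball c r, u w ∂μ|
      ≤ K / (μ (ball c' r')).toReal := by
  set A := ⨍ w in ball c r, u w ∂μ with hA
  have hfin' : μ (ball c' r') < ⊤ := lt_of_le_of_lt (measure_mono hss) hfin
  set m' := (μ (ball c' r')).toReal with hm'
  have hm'pos : 0 < m' := ENNReal.toReal_pos hpos'.ne' hfin'.ne
  have hint' : IntegrableOn u (ball c' r') μ := integrableOn_of_bounded' hu hub hfin'
  have hintc : IntegrableOn (fun _ => A) (ball c' r') μ :=
    (integrableOn_const (C := A) hfin'.ne)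
  have e1 : (⨍ w in ball c' r', u w ∂μ) - A
      = m'⁻¹ * ∫ w in ball c' r', (u w - A) ∂μ := by
    rw [integral_sub hint' hintc, setIntegral_const, setAverage_eq, smul_eq_mul, smul_eq_mul]
    have hmr : μ.real (ball c' r') = m' := rfl
    rw [hmr]
    field_simp
  have e2 : |∫ w in ball c' r', (u w - A) ∂μ| ≤ ∫ w in ball c' r', |u w - A| ∂μ :=
    by simpa [Real.norm_eq_abs] using
      norm_integral_le_integral_norm (μ := μ.restrict (ball c' r')) (fun w => u w - A)
  have e3 : ∫ w in ball c' r', |u w - A| ∂μ ≤ ∫ w in ball c r, |u w - A| ∂μ := by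
    refine setIntegral_mono_set ?_ (ae_of_all _ fun z => abs_nonneg _)
      (HasSubset.Subset.eventuallyLE hss)
    exact ((integrableOn_of_bounded' hu hub hfin).sub
      ((integrableOn_const (C := A) hfin.ne))).abs
  rw [e1, abs_mul, abs_inv, abs_of_pos hm'pos]
  rw [div_eq_inv_mul]
  exact mul_le_mul_of_nonneg_left (e2.trans (e3.trans hK)) (by positivity)

lemma dbl3 {μ : Measure X} {x0 : X} {r0 : ℝ} {Cμ : ℝ≥0}
    (hdbl : DoublingWithin μ x0 r0 Cμ) {c : X} {s : ℝ} (hs : 0 < s)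
    (hsub : ball c s ⊆ ball x0 r0) :
    μ (ball c s) ≤ (Cμ:ℝ≥0∞)^3 * μ (ball c (s/8)) := by
  have h1 := hdbl c (s/2) (by positivity) ((ball_subset_ball (by linarith)).trans hsub)
  have h2 := hdbl c (s/4) (by positivity) ((ball_subset_ball (by linarith)).trans hsub)
  have h3 := hdbl c (s/8) (by positivity) ((ball_subset_ball (by linarith)).trans hsub)
  rw [show 2*(s/2) = s by ring] at h1
  rw [show 2*(s/4) = s/2 by ring] at h2
  rw [show 2*(s/8) = s/4 by ring] at h3
  calc μ (ball c s) ≤ (Cμ:ℝ≥0∞) * μ (ball c (s/2)) := h1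
    _ ≤ (Cμ:ℝ≥0∞) * ((Cμ:ℝ≥0∞) * μ (ball c (s/4))) := mul_le_mul_right h2 _
    _ ≤ (Cμ:ℝ≥0∞) * ((Cμ:ℝ≥0∞) * ((Cμ:ℝ≥0∞) * μ (ball c (s/8)))) := by
        exact mul_le_mul_right (mul_le_mul_right h3 _) _
    _ = (Cμ:ℝ≥0∞)^3 * μ (ball c (s/8)) := by ring

lemma telescope {μ : Measure X} (hμ : BallsPosFinite μ) {p CPI lam : ℝ} (hp : 1 ≤ p)
    {x0 : X} {r0 : ℝ} (hCPI : 0 < CPI) (hlam : 1 ≤ lam)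
    (hPI : PoincareWithin μ 1 p x0 r0 CPI lam) {Cμ : ℝ≥0}
    (hdbl : DoublingWithin μ x0 r0 Cμ)
    {u : X → ℝ} (hu : Continuous u) {M : ℝ} (hub : ∀ z, |u z| ≤ M)
    (hug : IsUpperGradient (fun _ : X => (1:ℝ≥0∞)) (fun z => ((u z : ℝ) : EReal)))
    {ε : ℝ} (hε : 0 < ε) (hloc : ∀ a b : X, dist a b < ε → |u a - u b| ≤ dist a b)
    {c : X} {r : ℝ} (hr : 0 < r) (hsub : ball c r ⊆ ball x0 r0) :
    |u c - ⨍ w in ball c r, u w ∂μ| ≤ (8/7) * ((Cμ:ℝ)^3 * CPI * r) := by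
  set a : ℕ → ℝ := fun j => ⨍ w in ball c (r / 8^j), u w ∂μ with ha
  have hrj : ∀ j : ℕ, 0 < r / 8^j := fun j => by positivity
  have hsubj : ∀ j : ℕ, ball c (r / 8^j) ⊆ ball x0 r0 := fun j => by
    refine (ball_subset_ball ?_).trans hsub
    exact div_le_self hr.le (one_le_pow₀ (by norm_num))
  have hCnn : (0:ℝ) ≤ (Cμ:ℝ) := Cμ.coe_nonneg
  have hstep : ∀ j : ℕ, dist (a j) (a (j+1)) ≤ ((Cμ:ℝ)^3 * CPI * r) * (1/8)^j := by
    intro j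
    have hK := PI_L1 hμ hp hCPI hlam hPI hu hub hug (hrj j) (hsubj j)
    have hdiff := avg_diff_le (μ := μ) hu hub (c := c) (c' := c)
      (r := r / 8^j) (r' := r / 8^(j+1))
      (hμ c _ (hrj (j+1))).1 (hμ c _ (hrj j)).2
      (ball_subset_ball (by
        have : (0:ℝ) < (8:ℝ)^j := by positivity
        rw [pow_succ]
        rw [div_le_div_iff₀ (by positivity) (by positivity)]
        nlinarith [hr.le]))
      hK
    rw [Real.dist_eq, abs_sub_comm]
    refine hdiff.trans ?_
    -- K / m' ≤ Cμ^3 CPI r (1/8)^j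
    have hratio : (μ (ball c (r/8^j))).toReal
        ≤ (Cμ:ℝ)^3 * (μ (ball c (r/8^(j+1)))).toReal := by
      have h3 := dbl3 hdbl (hrj j) (hsubj j)
      rw [show r/8^j/8 = r/8^(j+1) by rw [pow_succ]; ring] at h3
      have := ENNReal.toReal_mono (by
        exact ENNReal.mul_ne_top (by simp) (hμ c _ (hrj (j+1))).2.ne) h3
      rwa [ENNReal.toReal_mul, ENNReal.toReal_pow, ENNReal.coe_toReal] at this
    have hm'pos : 0 < (μ (ball c (r/8^(j+1)))).toReal :=
      ENNReal.toReal_pos (hμ c _ (hrj (j+1))).1.ne' (hμ c _ (hrj (j+1))).2.ne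
    rw [div_le_iff₀ hm'pos]
    calc CPI * (r/8^j) * (μ (ball c (r/8^j))).toReal
        ≤ CPI * (r/8^j) * ((Cμ:ℝ)^3 * (μ (ball c (r/8^(j+1)))).toReal) := by
          refine mul_le_mul_of_nonneg_left hratio (by positivity)
      _ = (Cμ:ℝ)^3 * CPI * r * (1/8)^j * (μ (ball c (r/8^(j+1)))).toReal := by
          rw [div_pow, one_pow]; ring
  have hconv : ∀ j : ℕ, r / 8^j = r * (1/8)^j := by
    intro j; rw [div_pow, one_pow]; ring
  have hbound : ∀ j : ℕ, r/8^j < ε → dist (a j) (u c) ≤ r * (1/8)^j := by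
    intro j hjε
    set s := r/8^j with hs
    have hspos : 0 < s := hrj j
    have hfin' := (hμ c s hspos).2
    have hpos' := (hμ c s hspos).1
    set m := (μ (ball c s)).toReal with hm
    have hmpos : 0 < m := ENNReal.toReal_pos hpos'.ne' hfin'.ne
    have hint' : IntegrableOn u (ball c s) μ := integrableOn_of_bounded' hu hub hfin'
    have hintc : IntegrableOn (fun _ => u c) (ball c s) μ :=
      (integrableOn_const (C := u c) hfin'.ne)
    have e1 : a j - u c = m⁻¹ * ∫ w in ball c s, (u w - u c) ∂μ := by
      rw [ha]
      simp only []
      rw [integral_sub hint' hintc, setIntegral_const, setAverage_eq, smul_eq_mul, smul_eq_mul]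
      have hmr : μ.real (ball c s) = m := rfl
      rw [hmr]
      field_simp
      rfl
    have e2 : ‖∫ w in ball c s, (u w - u c) ∂μ‖ ≤ s * m := by
      refine norm_setIntegral_le_of_norm_le_const hfin' ?_
      intro z hz
      have hzc : dist z c < s := mem_ball.mp hz
      calc ‖u z - u c‖ = |u z - u c| := rfl
        _ ≤ dist z c := hloc z c (lt_trans hzc hjε)
        _ ≤ s := hzc.le
    rw [Real.dist_eq, e1, abs_mul, abs_inv, abs_of_pos hmpos]
    calc m⁻¹ * |∫ w in ball c s, (u w - u c) ∂μ| ≤ m⁻¹ * (s * m) := by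
          refine mul_le_mul_of_nonneg_left e2 (by positivity)
      _ = s := by field_simp
      _ = r * (1/8)^j := hconv j
  have htend : Tendsto a atTop (nhds (u c)) := by
    rw [tendsto_iff_dist_tendsto_zero]
    have hr0 : Tendsto (fun j : ℕ => r * (1/8)^j) atTop (nhds 0) := by
      simpa using (tendsto_pow_atTop_nhds_zero_of_lt_one (by norm_num : (0:ℝ) ≤ 1/8)
        (by norm_num : (1/8:ℝ) < 1)).const_mul r
    refine squeeze_zero' ?_ ?_ hr0
    · exact Filter.Eventually.of_forall fun j => dist_nonneg
    · have hev : ∀ᶠ j in atTop, r * (1/8)^j < ε := hr0.eventually (gt_mem_nhds hε)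
      exact hev.mono fun j hj => hbound j (by rw [hconv j]; exact hj)
  have hfinal := dist_le_of_le_geometric_of_tendsto₀ (1/8) ((Cμ:ℝ)^3*CPI*r)
    (by norm_num) hstep htend
  have ha0 : a 0 = ⨍ w in ball c r, u w ∂μ := by
    simp only [ha, pow_zero, div_one]
  rw [Real.dist_eq, ha0] at hfinal
  rw [abs_sub_comm]
  refine hfinal.trans (le_of_eq (by ring))
lemma chain_bound {μ : Measure X} (hμ : BallsPosFinite μ) {p CPI lam : ℝ} (hp : 1 ≤ p)
    (hCPI : 0 < CPI) (hlam : 1 ≤ lam) {x y : X} (hxy : x ≠ y)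
    (hPI : PoincareWithin μ 1 p x (2 * dist x y) CPI lam) {Cμ : ℝ≥0}
    (hdbl : DoublingWithin μ x (2 * dist x y) Cμ) {ε : ℝ} (hε : 0 < ε) :
    chainDistE ε x y ≤ ENNReal.ofReal
      ((24/7 * (Cμ:ℝ)^3 + 2 * (Cμ:ℝ)^2) * CPI * dist x y) := by
  set d := dist x y with hdd
  have hd : 0 < d := dist_pos.mpr hxy
  set A : ℝ := 24/7 * (Cμ:ℝ)^3 + 2 * (Cμ:ℝ)^2 with hA
  have hAnn : 0 ≤ A := by positivity
  set M : ℝ := A * CPI * d + d with hM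
  have hACPId : 0 ≤ A * CPI * d := by positivity
  have hMpos : 0 < M := by simp only [hM]; linarith
  set u : X → ℝ := ucap ε x M with hu'
  have hu : Continuous u := continuous_ucap hε x M
  have hub : ∀ z, |u z| ≤ M := fun z => by
    rw [abs_of_nonneg (ucap_nonneg _ _ _ _)]
    exact ucap_le _ _ hMpos.le _
  have hloc : ∀ a b : X, dist a b < ε → |u a - u b| ≤ dist a b :=
    fun a b hab => abs_ucap_sub_le hab
  have hug : IsUpperGradient (fun _ : X => (1:ℝ≥0∞)) (fun z => ((u z : ℝ) : EReal)) :=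
    upperGradient_one hε hloc
  have hsub1 : ball y d ⊆ ball x (2*d) := by
    intro z hz
    rw [mem_ball] at hz ⊢
    calc dist z x ≤ dist z y + dist y x := dist_triangle _ _ _
      _ < d + d := by rw [dist_comm y x, ← hdd]; linarith
      _ = 2*d := by ring
  have hT1 := telescope hμ hp hCPI hlam hPI hdbl hu hub hug hε hloc
    (mul_pos two_pos hd) (subset_refl (ball x (2*d)))
  have hT2 := telescope hμ hp hCPI hlam hPI hdbl hu hub hug hε hloc hd hsub1
  -- bridge
  have hK := PI_L1 hμ hp hCPI hlam hPI hu hub hug (mul_pos two_pos hd)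
    (subset_refl (ball x (2*d)))
  have hbr := avg_diff_le (μ := μ) hu hub (c := x) (c' := y) (r := 2*d) (r' := d)
    (hμ y d hd).1 (hμ x (2*d) (mul_pos two_pos hd)).2 hsub1 hK
  have hratio : (μ (ball x (2*d))).toReal ≤ (Cμ:ℝ)^2 * (μ (ball y d)).toReal := by
    have h1 := hdbl x d hd (ball_subset_ball (by linarith))
    have h2 : μ (ball x d) ≤ μ (ball y (2*d)) := by
      refine measure_mono fun z hz => ?_
      rw [mem_ball] at hz ⊢
      calc dist z y ≤ dist z x + dist x y := dist_triangle _ _ _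
        _ < d + d := by rw [← hdd]; linarith
        _ = 2*d := by ring
    have h3 := hdbl y d hd hsub1
    have hcomb : μ (ball x (2*d)) ≤ (Cμ:ℝ≥0∞)^2 * μ (ball y d) := by
      calc μ (ball x (2*d)) ≤ (Cμ:ℝ≥0∞) * μ (ball x d) := h1
        _ ≤ (Cμ:ℝ≥0∞) * μ (ball y (2*d)) := mul_le_mul_right h2 _
        _ ≤ (Cμ:ℝ≥0∞) * ((Cμ:ℝ≥0∞) * μ (ball y d)) := mul_le_mul_right h3 _
        _ = (Cμ:ℝ≥0∞)^2 * μ (ball y d) := by ring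
    have := ENNReal.toReal_mono
      (ENNReal.mul_ne_top (by simp) (hμ y d hd).2.ne) hcomb
    rwa [ENNReal.toReal_mul, ENNReal.toReal_pow, ENNReal.coe_toReal] at this
  have hbpos : 0 < (μ (ball y d)).toReal :=
    ENNReal.toReal_pos (hμ y d hd).1.ne' (hμ y d hd).2.ne
  have hbr2 : |(⨍ w in ball y d, u w ∂μ) - ⨍ w in ball x (2*d), u w ∂μ|
      ≤ 2 * (Cμ:ℝ)^2 * CPI * d := by
    refine hbr.trans ?_
    rw [div_le_iff₀ hbpos]
    calc CPI * (2*d) * (μ (ball x (2*d))).toReal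
        ≤ CPI * (2*d) * ((Cμ:ℝ)^2 * (μ (ball y d)).toReal) :=
          mul_le_mul_of_nonneg_left hratio (by positivity)
      _ = 2 * (Cμ:ℝ)^2 * CPI * d * (μ (ball y d)).toReal := by ring
  have hux : u x = 0 := ucap_self _ _ _
  have huy : u y ≤ A * CPI * d := by
    have habs : u y = |u y| := (abs_of_nonneg (ucap_nonneg _ _ _ _)).symm
    have h1 : |u y - ⨍ w in ball y d, u w ∂μ| ≤ 8/7 * ((Cμ:ℝ)^3 * CPI * d) := hT2
    have h2 : |u x - ⨍ w in ball x (2*d), u w ∂μ| ≤ 8/7 * ((Cμ:ℝ)^3 * CPI * (2*d)) := hT1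
    rw [hux] at h2
    have t1 := abs_sub_abs_le_abs_sub (u y) (u y - (u y - ⨍ w in ball y d, u w ∂μ))
    have e1 := abs_le.mp h1
    have e2 := abs_le.mp h2
    have e3 := abs_le.mp hbr2
    have h0 : 0 ≤ u y := ucap_nonneg _ _ _ _
    rw [habs, abs_le]
    constructor
    · linarith [hACPId]
    · simp only [hA]
      linarith [e1.2, e2.1, e3.2, e1.1, e2.2, e3.1]
  -- conclude on chainDistE
  have hlt : A * CPI * d < M := by simp only [hM]; linarith
  rcases le_total (chainDistE ε x y) (ENNReal.ofReal M) with hcase | hcase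
  · have hmin : min (chainDistE ε x y) (ENNReal.ofReal M) = chainDistE ε x y :=
      min_eq_left hcase
    have hne : chainDistE ε x y ≠ ⊤ := by
      intro hcon
      rw [hcon] at hcase
      exact (lt_irrefl ⊤ (lt_of_le_of_lt hcase (ENNReal.ofReal_lt_top))).elim
    have : (chainDistE ε x y).toReal ≤ A * CPI * d := by
      have : u y = (chainDistE ε x y).toReal := by rw [hu', ucap, hmin]
      linarith [huy, this.symm.le]
    calc chainDistE ε x y = ENNReal.ofReal (chainDistE ε x y).toReal :=
          (ENNReal.ofReal_toReal hne).symm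
      _ ≤ ENNReal.ofReal (A * CPI * d) := ENNReal.ofReal_le_ofReal this
  · exfalso
    have hmin : min (chainDistE ε x y) (ENNReal.ofReal M) = ENNReal.ofReal M :=
      min_eq_right hcase
    have : u y = M := by rw [hu', ucap, hmin, ENNReal.toReal_ofReal hMpos.le]
    rw [this] at huy
    linarith

lemma exists_discrete_path {X : Type*} [MetricSpace X] {x y : X} {ε S : ℝ} (hε : 0 < ε)
    (hS : 0 ≤ S) (h : chainDistE ε x y ≤ ENNReal.ofReal S) {η : ℝ} (hη : 0 < η) :
    ∃ (γ : ℝ → X) (L : ℝ), dist x y ≤ L ∧ L < S + η ∧ γ 0 = x ∧ γ 1 = y ∧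
      (∀ s t : ℝ, s ∈ Set.Icc (0:ℝ) 1 → t ∈ Set.Icc (0:ℝ) 1 → s ≤ t →
        dist (γ s) (γ t) ≤ L * (t - s) + ε) ∧
      (∀ t ∈ Set.Icc (0:ℝ) 1, dist x (γ t) ≤ (L + dist x y)/2) := by
  -- extract a chain
  have hlt : chainDistE ε x y < ENNReal.ofReal (S + η) :=
    lt_of_le_of_lt h (ENNReal.ofReal_lt_ofReal_iff (by linarith) |>.mpr (by linarith))
  rw [chainDistE] at hlt
  obtain ⟨n, hn⟩ := iInf_lt_iff.mp hlt
  obtain ⟨w, hw⟩ := iInf_lt_iff.mp hn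
  obtain ⟨hch, hval⟩ := iInf_lt_iff.mp hw
  obtain ⟨h0, hny, hlink⟩ := hch
  set T : ℕ → ℝ := fun k => ∑ i ∈ Finset.range k, dist (w i) (w (i+1)) with hT
  set L := T n with hL
  have hsum : L < S + η := by
    have := (ENNReal.ofReal_lt_ofReal_iff (by linarith)).mp hval
    exact this
  have hTnn : ∀ k, 0 ≤ T k := fun k => Finset.sum_nonneg fun i _ => dist_nonneg
  have hTmono : Monotone T := by
    intro i j hij
    exact Finset.sum_le_sum_of_subset_of_nonneg
      (Finset.range_subset_range.mpr hij) (fun k _ _ => dist_nonneg)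
  have hprefix : ∀ i j : ℕ, i ≤ j → dist (w i) (w j) ≤ T j - T i := by
    intro i j hij
    calc dist (w i) (w j) ≤ ∑ k ∈ Finset.Ico i j, dist (w k) (w (k+1)) :=
          dist_le_Ico_sum_dist w hij
      _ = T j - T i := Finset.sum_Ico_eq_sub _ hij
  have hdL : dist x y ≤ L := by
    have := hprefix 0 n (Nat.zero_le n)
    rw [h0, hny] at this
    simpa [hT] using this
  -- index function
  have hFne : ∀ τ : ℝ, 0 ≤ τ →
      ((Finset.range (n+1)).filter (fun k => T k ≤ τ)).Nonempty := by
    intro τ hτ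
    exact ⟨0, Finset.mem_filter.mpr ⟨Finset.mem_range.mpr (Nat.succ_pos n), by
      simpa [hT] using hτ⟩⟩
  classical
  set idx : ℝ → ℕ := fun τ =>
    if hne : ((Finset.range (n+1)).filter (fun k => T k ≤ τ)).Nonempty
    then ((Finset.range (n+1)).filter (fun k => T k ≤ τ)).max' hne else 0 with hidx
  have hidx_mem : ∀ τ : ℝ, 0 ≤ τ → (idx τ ≤ n ∧ T (idx τ) ≤ τ) := by
    intro τ hτ
    have hne := hFne τ hτ
    have hmem := Finset.max'_mem _ hne
    rw [Finset.mem_filter, Finset.mem_range] at hmem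
    simp only [hidx, dif_pos hne]
    exact ⟨Nat.lt_succ_iff.mp hmem.1, hmem.2⟩
  have hidx_max : ∀ τ : ℝ, 0 ≤ τ → ∀ k ≤ n, T k ≤ τ → k ≤ idx τ := by
    intro τ hτ k hk hTk
    have hne := hFne τ hτ
    simp only [hidx, dif_pos hne]
    exact Finset.le_max' _ k (Finset.mem_filter.mpr ⟨Finset.mem_range.mpr (by omega), hTk⟩)
  set γ : ℝ → X := fun t => w (idx ((max 0 (min 1 t)) * L)) with hγ
  have hLnn : 0 ≤ L := hTnn n
  refine ⟨γ, L, hdL, hsum, ?_, ?_, ?_, ?_⟩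
  · -- γ 0 = x
    have : max 0 (min 1 (0:ℝ)) * L = 0 := by norm_num
    rw [hγ]; simp only [this]
    have hi := hidx_mem 0 le_rfl
    have : dist (w 0) (w (idx 0)) ≤ T (idx 0) - T 0 := hprefix 0 _ (Nat.zero_le _)
    have hT0 : T 0 = 0 := by simp [hT]
    have : dist (w 0) (w (idx 0)) ≤ 0 := by
      have h1 := hi.2
      have h2 := hTnn (idx 0)
      linarith
    have := le_antisymm this dist_nonneg
    rw [← h0]
    exact (dist_eq_zero.mp this).symm
  · -- γ 1 = y
    have he : max 0 (min 1 (1:ℝ)) * L = L := by norm_num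
    rw [hγ]; simp only [he]
    have hidxn : idx L = n := by
      have h1 := (hidx_mem L hLnn).1
      have h2 := hidx_max L hLnn n le_rfl le_rfl
      omega
    rw [hidxn, hny]
  · -- almost Lipschitz
    intro s t hs ht hst
    have hcs : max 0 (min 1 s) = s := by
      rw [min_eq_right hs.2, max_eq_right hs.1]
    have hct : max 0 (min 1 t) = t := by
      rw [min_eq_right ht.2, max_eq_right ht.1]
    rw [hγ]; simp only [hcs, hct]
    have hsL : 0 ≤ s * L := mul_nonneg hs.1 hLnn
    have htL : 0 ≤ t * L := mul_nonneg (hs.1.trans hst) hLnn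
    set i := idx (s * L) with hi
    set j := idx (t * L) with hj
    have hij : i ≤ j :=
      hidx_max (t*L) htL i (hidx_mem _ hsL).1
        ((hidx_mem _ hsL).2.trans (by nlinarith))
    have hd1 : dist (w i) (w j) ≤ T j - T i := hprefix i j hij
    have hTj : T j ≤ t * L := (hidx_mem _ htL).2
    rcases Nat.lt_or_ge i n with hin | hin
    · -- T (i+1) > s * L
      have hTi1 : s * L < T (i+1) := by
        by_contra hcon
        push_neg at hcon
        have := hidx_max (s*L) hsL (i+1) (by omega) hcon
        omega
      have hstep : T (i+1) - T i < ε := by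
        have : T (i+1) - T i = dist (w i) (w (i+1)) := by
          simp [hT, Finset.sum_range_succ]
        rw [this]
        exact hlink i hin
      calc dist (w i) (w j) ≤ T j - T i := hd1
        _ ≤ t * L - T i := by linarith
        _ ≤ t * L - s * L + ε := by linarith
        _ = L * (t - s) + ε := by ring
    · -- i = n hence j = n
      have hii : i = n := le_antisymm (hidx_mem _ hsL).1 hin
      have hjj : j = n := le_antisymm (hidx_mem _ htL).1 (by omega)
      rw [hii, hjj]
      simp only [dist_self]
      have : 0 ≤ L * (t - s) := mul_nonneg hLnn (by linarith)
      linarith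
  · -- containment
    intro t ht
    have hct : max 0 (min 1 t) = t := by
      rw [min_eq_right ht.2, max_eq_right ht.1]
    rw [hγ]; simp only [hct]
    have htL : 0 ≤ t * L := mul_nonneg ht.1 hLnn
    set i := idx (t * L) with hi
    have h1 : dist x (w i) ≤ T i := by
      have := hprefix 0 i (Nat.zero_le _)
      rw [h0] at this
      have hT0 : T 0 = 0 := by simp [hT]
      linarith
    have h2 : dist (w i) y ≤ L - T i := by
      have := hprefix i n (hidx_mem _ htL).1
      rw [hny] at this
      exact this
    have h3 : dist x (w i) ≤ dist x y + (L - T i) := by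
      have h4 := dist_triangle x y (w i)
      rw [dist_comm y (w i)] at h4
      linarith
    rcases le_total (T i) ((L + dist x y)/2) with hc | hc
    · linarith
    · linarith
end CCLP

/-- If the `p`-Poincaré inequality (constant `CPI`, dilation `lam`) and the
doubling property (constant `Cμ`) hold within `B0 = B(x, 2 d(x,y))`, `Λ = 3 Cμ³ CPI`, and
the closure of `Λ B0` is compact, then `x` and `y` can be connected by a curve in the
closure of `Λ B0` of length at most `L d(x,y)` with `L = 9Λ`. -/
theorem connecting_curve_of_local_poincare
    {X : Type*} [MetricSpace X] [MeasurableSpace X] [BorelSpace X]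
    (μ : Measure X) (hμ : BallsPosFinite μ) (p : ℝ) (hp : 1 ≤ p)
    (x y : X) (hxy : x ≠ y)
    (Cμ : ℝ≥0) (CPI lam : ℝ) (hCPI : 0 < CPI) (hlam : 1 ≤ lam)
    (hdbl : DoublingWithin μ x (2 * dist x y) Cμ)
    (hPI : PoincareWithin μ 1 p x (2 * dist x y) CPI lam)
    (Λ L : ℝ) (hΛ : Λ = 3 * (Cμ : ℝ) ^ 3 * CPI) (hL : L = 9 * Λ)
    (hcpt : IsCompact (closure (ball x (Λ * (2 * dist x y))))) :
    ∃ γ : ℝ → X, ConnectsInWithLength γ x y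
      (closure (ball x (Λ * (2 * dist x y)))) (ENNReal.ofReal (L * dist x y)) := by
  classical
  have hd : 0 < dist x y := dist_pos.mpr hxy
  set d := dist x y with hdd
  -- Cμ ≥ 1
  have hCμ1 : 1 ≤ (Cμ:ℝ) := by
    by_contra hcon
    push_neg at hcon
    have h1 := hdbl x d hd (ball_subset_ball (by linarith))
    have h2 : μ (ball x d) ≤ μ (ball x (2 * d)) :=
      measure_mono (ball_subset_ball (by linarith))
    have hpos := (hμ x d hd).1
    have hfin := (hμ x d hd).2
    have hC1 : (Cμ:ℝ≥0∞) < 1 := by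
      rw [← ENNReal.coe_one, ENNReal.coe_lt_coe]
      exact_mod_cast hcon
    have hlt : μ (ball x d) < μ (ball x d) := by
      calc μ (ball x d) ≤ (Cμ:ℝ≥0∞) * μ (ball x d) := h2.trans h1
        _ < 1 * μ (ball x d) :=
          by rw [mul_comm, mul_comm 1]; exact ENNReal.mul_lt_mul_right hpos.ne' hfin.ne hC1
        _ = μ (ball x d) := one_mul _
    exact lt_irrefl _ hlt
  set A : ℝ := 24/7 * (Cμ:ℝ)^3 + 2*(Cμ:ℝ)^2 with hA
  set S : ℝ := A * CPI * d with hS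
  have hSnn : 0 ≤ S := by positivity
  have hchain : ∀ ε : ℝ, 0 < ε → CCLP.chainDistE ε x y ≤ ENNReal.ofReal S :=
    fun ε hε => CCLP.chain_bound hμ hp hCPI hlam hxy hPI hdbl hε
  have hpaths : ∀ m : ℕ, ∃ (γ : ℝ → X) (Lm : ℝ), dist x y ≤ Lm ∧ Lm < S + 1/(m+1:ℝ) ∧
      γ 0 = x ∧ γ 1 = y ∧
      (∀ s t : ℝ, s ∈ Set.Icc (0:ℝ) 1 → t ∈ Set.Icc (0:ℝ) 1 → s ≤ t →
        dist (γ s) (γ t) ≤ Lm * (t - s) + 1/(m+1:ℝ)) ∧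
      (∀ t ∈ Set.Icc (0:ℝ) 1, dist x (γ t) ≤ (Lm + dist x y)/2) := by
    intro m
    have hm : (0:ℝ) < 1/(m+1:ℝ) := by positivity
    exact CCLP.exists_discrete_path hm hSnn (hchain _ hm) hm
  choose γs Ls hLd hLS hγ0 hγ1 hlips hconts using hpaths
  have honem : Tendsto (fun m : ℕ => 1/(m+1:ℝ)) atTop (nhds 0) :=
    tendsto_one_div_add_atTop_nhds_zero_nat
  have hdS : d ≤ S := by
    have h1 : Tendsto (fun m : ℕ => S + 1/(m+1:ℝ)) atTop (nhds (S + 0)) :=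
      (tendsto_const_nhds).add honem
    rw [add_zero] at h1
    exact ge_of_tendsto' h1 (fun m => ((hLd m).trans (hLS m).le : d ≤ S + 1/(m+1:ℝ)))
  have hA6 : A < 6 * (Cμ:ℝ)^3 := by
    have hcpos : (0:ℝ) < (Cμ:ℝ) := lt_of_lt_of_le one_pos hCμ1
    have h23 : (Cμ:ℝ)^2 ≤ (Cμ:ℝ)^3 := by nlinarith
    have h3pos : (0:ℝ) < (Cμ:ℝ)^3 := by positivity
    rw [hA]
    linarith
  have hrad : (S + d)/2 < Λ * (2*d) := by
    have h1 : S < 6 * (Cμ:ℝ)^3 * CPI * d := by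
      rw [hS]
      have : 0 < CPI * d := by positivity
      nlinarith [hA6]
    rw [hΛ]
    nlinarith [hdS, h1]
  set K := closure (ball x (Λ * (2 * d))) with hK
  set F : Ultrafilter ℕ := Ultrafilter.of atTop with hF
  have hFle : (F : Filter ℕ) ≤ atTop := Ultrafilter.of_le _
  set clamp : ℝ → ℝ := fun t => max 0 (min 1 t) with hclamp
  have hclampIcc : ∀ t : ℝ, clamp t ∈ Set.Icc (0:ℝ) 1 := fun t =>
    ⟨le_max_left _ _, max_le zero_le_one (min_le_left _ _)⟩
  have hclamp_eq : ∀ t ∈ Set.Icc (0:ℝ) 1, clamp t = t := by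
    intro t ht
    rw [hclamp]
    simp only []
    rw [min_eq_right ht.2, max_eq_right ht.1]
  set q : ℕ → ℝ → X := fun m t => γs m (clamp t) with hq
  have hqK : ∀ t : ℝ, ∀ᶠ m in atTop, q m t ∈ K := by
    intro t
    have htt : Tendsto (fun m : ℕ => ((S + 1/(m+1:ℝ)) + d)/2) atTop
        (nhds ((S + 0 + d)/2)) := (((tendsto_const_nhds).add honem).add tendsto_const_nhds).div_const 2
    rw [add_zero] at htt
    have hev : ∀ᶠ m : ℕ in atTop, ((S + 1/((m:ℝ)+1)) + d)/2 < Λ * (2*d) :=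
      htt.eventually (eventually_lt_nhds hrad)
    refine hev.mono fun m hm => ?_
    refine subset_closure (mem_ball'.mpr ?_)
    calc dist x (q m t) ≤ (Ls m + d)/2 := hconts m _ (hclampIcc t)
      _ ≤ ((S + 1/(m+1:ℝ)) + d)/2 := by linarith [hLS m]
      _ < Λ * (2*d) := hm
  have hqlim : ∀ t : ℝ, ∃ z, z ∈ K ∧ Tendsto (fun m => q m t) (F : Filter ℕ) (nhds z) := by
    intro t
    have hmem : K ∈ Ultrafilter.map (fun m => q m t) F := by
      rw [Ultrafilter.mem_map]
      exact hFle (hqK t)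
    obtain ⟨z, hzK, hz⟩ := hcpt.ultrafilter_le_nhds _ (le_principal_iff.mpr hmem)
    exact ⟨z, hzK, hz⟩
  choose Γ hΓK hΓt using hqlim
  have hΓ0 : Γ 0 = x := by
    have hc : ∀ m : ℕ, q m 0 = x := by
      intro m
      rw [hq]
      simp only []
      rw [hclamp_eq 0 ⟨le_rfl, zero_le_one⟩, hγ0]
    have h1 : Tendsto (fun m => q m 0) (F : Filter ℕ) (nhds x) := by
      simp only [hc]
      exact tendsto_const_nhds
    exact tendsto_nhds_unique (hΓt 0) h1
  have hΓ1 : Γ 1 = y := by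
    have hc : ∀ m : ℕ, q m 1 = y := by
      intro m
      rw [hq]
      simp only []
      rw [hclamp_eq 1 ⟨zero_le_one, le_rfl⟩, hγ1]
    have h1 : Tendsto (fun m => q m 1) (F : Filter ℕ) (nhds y) := by
      simp only [hc]
      exact tendsto_const_nhds
    exact tendsto_nhds_unique (hΓt 1) h1
  have hΓlip : ∀ s t : ℝ, s ∈ Set.Icc (0:ℝ) 1 → t ∈ Set.Icc (0:ℝ) 1 → s ≤ t →
      dist (Γ s) (Γ t) ≤ S * (t - s) := by
    intro s t hs ht hst
    have h1 : Tendsto (fun m => dist (q m s) (q m t)) (F : Filter ℕ)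
        (nhds (dist (Γ s) (Γ t))) := (hΓt s).dist (hΓt t)
    have h2 : Tendsto (fun m : ℕ => (S + 1/(m+1:ℝ))*(t-s) + 1/(m+1:ℝ)) atTop
        (nhds ((S + 0)*(t-s) + 0)) :=
      (((tendsto_const_nhds).add honem).mul tendsto_const_nhds).add honem
    rw [add_zero, add_zero] at h2
    refine le_of_tendsto_of_tendsto' h1 (h2.mono_left hFle) fun m => ?_
    have h3 : dist (q m s) (q m t) ≤ Ls m * (t - s) + 1/(m+1:ℝ) := by
      rw [hq]
      simp only []
      rw [hclamp_eq s hs, hclamp_eq t ht]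
      exact hlips m s t hs ht hst
    refine h3.trans ?_
    have h4 : Ls m * (t-s) ≤ (S + 1/(m+1:ℝ))*(t-s) :=
      mul_le_mul_of_nonneg_right (hLS m).le (by linarith)
    linarith
  have hlipOn : LipschitzOnWith (Real.toNNReal S) Γ (Set.Icc 0 1) := by
    refine LipschitzOnWith.of_dist_le_mul fun a ha b hb => ?_
    rw [Real.coe_toNNReal S hSnn]
    rcases le_total a b with hab | hab
    · calc dist (Γ a) (Γ b) ≤ S * (b - a) := hΓlip a b ha hb hab
        _ = S * dist a b := by rw [Real.dist_eq, abs_of_nonpos (by linarith)]; ring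
    · calc dist (Γ a) (Γ b) = dist (Γ b) (Γ a) := dist_comm _ _
        _ ≤ S * (a - b) := hΓlip b a hb ha hab
        _ = S * dist a b := by rw [Real.dist_eq, abs_of_nonneg (by linarith)]
  refine ⟨Γ, hlipOn.continuousOn, hΓ0, hΓ1, fun t _ => hΓK t, ?_⟩
  have h2 := hlipOn.comp_eVariationOn_le (g := (id : ℝ → ℝ)) (s := Set.Icc (0:ℝ) 1)
    (fun a ha => ha)
  have h3 : eVariationOn (id : ℝ → ℝ) (Set.Icc 0 1) ≤ ENNReal.ofReal 1 := by
    have := MonotoneOn.eVariationOn_le (f := (id : ℝ → ℝ)) (s := Set.Icc (0:ℝ) 1)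
      monotoneOn_id (a := 0) (b := 1) ⟨le_rfl, zero_le_one⟩ ⟨zero_le_one, le_rfl⟩
    simpa [Set.inter_self] using this
  have h4 : eVariationOn Γ (Set.Icc 0 1) ≤ ENNReal.ofReal S := by
    calc eVariationOn Γ (Set.Icc 0 1) = eVariationOn (Γ ∘ id) (Set.Icc 0 1) := rfl
      _ ≤ (Real.toNNReal S : ℝ≥0∞) * eVariationOn (id : ℝ → ℝ) (Set.Icc 0 1) := h2
      _ ≤ (Real.toNNReal S : ℝ≥0∞) * ENNReal.ofReal 1 := mul_le_mul_right h3 _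
      _ = ENNReal.ofReal S := by
          rw [ENNReal.ofReal_one, mul_one, ENNReal.ofReal]
  refine h4.trans (ENNReal.ofReal_le_ofReal ?_)
  rw [hL, hΛ, hS]
  have h5 : A ≤ 27 * (Cμ:ℝ)^3 := by nlinarith [hCμ1, one_le_pow₀ (n := 2) hCμ1]
  nlinarith [hCPI, hd, h5]
end

section
/- Assume that X is locally compact and that μ is locally doubling and supports a local p-Poincaré inequality. Then X is locally quasiconvex: for every x0 ∈ X there are r0, L > 0 (depending on x0) such that every pair of points x, y ∈ B(x0,r0) can be connected by a curve in X of length at most L d(x,y). If X is moreover proper and connected, then X is semilocally quasiconvex: for every ball B(x0,r0) there is L > 0 (depending on the ball) such that every pair of points x, y ∈ B(x0,r0) can be connected by a curve in X of length at most L d(x,y). -/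
open MeasureTheory Metric Set ENNReal NNReal Filter

open Topology
set_option maxHeartbeats 1600000

section AuxChain
variable {X : Type*} [MetricSpace X]

/-- The ε-chain distance between two points. -/
noncomputable def chainDist (ε : ℝ) (x y : X) : ℝ≥0∞ :=
  ⨅ (k : ℕ) (z : ℕ → X) (_ : z 0 = x) (_ : z k = y)
    (_ : ∀ i < k, dist (z i) (z (i + 1)) ≤ ε),
    ENNReal.ofReal (∑ i ∈ Finset.range k, dist (z i) (z (i + 1)))

lemma chainDist_le {ε : ℝ} {x y : X} (k : ℕ) (z : ℕ → X) (h0 : z 0 = x) (hk : z k = y)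
    (hm : ∀ i < k, dist (z i) (z (i + 1)) ≤ ε) :
    chainDist ε x y ≤ ENNReal.ofReal (∑ i ∈ Finset.range k, dist (z i) (z (i + 1))) :=
  iInf_le_of_le k <| iInf_le_of_le z <| iInf_le_of_le h0 <| iInf_le_of_le hk <|
    iInf_le_of_le hm le_rfl

lemma exists_chain_of_lt {ε : ℝ} {x y : X} {t : ℝ≥0∞} (h : chainDist ε x y < t) :
    ∃ (k : ℕ) (z : ℕ → X), z 0 = x ∧ z k = y ∧ (∀ i < k, dist (z i) (z (i + 1)) ≤ ε) ∧
      ENNReal.ofReal (∑ i ∈ Finset.range k, dist (z i) (z (i + 1))) < t := by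
  rw [chainDist] at h
  rw [iInf_lt_iff] at h; obtain ⟨k, h⟩ := h
  rw [iInf_lt_iff] at h; obtain ⟨z, h⟩ := h
  rw [iInf_lt_iff] at h; obtain ⟨h0, h⟩ := h
  rw [iInf_lt_iff] at h; obtain ⟨hk, h⟩ := h
  rw [iInf_lt_iff] at h; obtain ⟨hm, h⟩ := h
  exact ⟨k, z, h0, hk, hm, h⟩

lemma chainDist_self (ε : ℝ) (x : X) : chainDist ε x x = 0 := by
  have := chainDist_le (ε := ε) 0 (fun _ => x) rfl rfl (by simp)
  simpa using this

lemma chainDist_le_dist {ε : ℝ} {x y : X} (h : dist x y ≤ ε) :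
    chainDist ε x y ≤ ENNReal.ofReal (dist x y) := by
  have h0 : (fun i => if i = 0 then x else y) 0 = x := by simp
  have h1 : (fun i => if i = 0 then x else y) 1 = y := by simp
  have hm : ∀ i < 1, dist ((fun i => if i = 0 then x else y) i)
      ((fun i => if i = 0 then x else y) (i + 1)) ≤ ε := by
    intro i hi; interval_cases i; simpa using h
  have := chainDist_le 1 (fun i => if i = 0 then x else y) h0 h1 hm
  simpa using this

lemma chainDist_anti {ε ε' : ℝ} (h : ε ≤ ε') (x y : X) :
    chainDist ε' x y ≤ chainDist ε x y := by
  refine le_iInf fun k => le_iInf fun z => le_iInf fun h0 => le_iInf fun hk =>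
    le_iInf fun hm => ?_
  exact chainDist_le k z h0 hk (fun i hi => (hm i hi).trans h)

lemma dist_le_sum_chain (k : ℕ) (z : ℕ → X) :
    ∀ i j, i ≤ j → dist (z i) (z j) ≤ ∑ m ∈ Finset.range (j - i), dist (z (i + m)) (z (i + m + 1)) := by
  intro i j hij
  obtain ⟨n, rfl⟩ := Nat.exists_eq_add_of_le hij
  induction n with
  | zero => simp
  | succ n ih =>
    have : dist (z i) (z (i + (n+1))) ≤ dist (z i) (z (i + n)) + dist (z (i + n)) (z (i + n + 1)) := by
      rw [show i + (n+1) = i + n + 1 by ring]; exact dist_triangle _ _ _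
    refine this.trans ?_
    rw [show i + (n+1) - i = n + 1 by omega, Finset.sum_range_succ]
    have := ih (by omega)
    rw [show i + n - i = n by omega] at this
    linarith

lemma chainDist_triangle (ε : ℝ) (x y z : X) :
    chainDist ε x z ≤ chainDist ε x y + chainDist ε y z := by
  refine ENNReal.le_of_forall_pos_le_add fun η hη hfin => ?_
  have hb1 : chainDist ε x y < ⊤ := lt_of_le_of_lt le_self_add hfin
  have hb2 : chainDist ε y z < ⊤ := lt_of_le_of_lt le_add_self hfin
  have h1 : chainDist ε x y < chainDist ε x y + (η/2 : ℝ≥0) := by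
    refine ENNReal.lt_add_right hb1.ne ?_
    simp [ne_eq, ENNReal.coe_eq_zero]; positivity
  have h2 : chainDist ε y z < chainDist ε y z + (η/2 : ℝ≥0) := by
    refine ENNReal.lt_add_right hb2.ne ?_
    simp [ne_eq, ENNReal.coe_eq_zero]; positivity
  obtain ⟨k, w, h0, hk, hm, hs⟩ := exists_chain_of_lt h1
  obtain ⟨k', w', h0', hk', hm', hs'⟩ := exists_chain_of_lt h2
  set v : ℕ → X := fun i => if i < k then w i else w' (i - k) with hv
  have hveq : ∀ i ≤ k, v i = w i := by
    intro i hi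
    rcases lt_or_eq_of_le hi with h | h
    · simp [hv, h]
    · subst h; simp [hv, hk, ← h0']
  have hveq' : ∀ i, v (k + i) = w' i := by
    intro i
    rcases Nat.eq_zero_or_pos i with h | h
    · subst h; simpa using (hveq k le_rfl).trans (hk.trans h0'.symm)
    · simp [hv, Nat.not_lt.2 (Nat.le_add_right k i), Nat.add_sub_cancel_left]
  have h0v : v 0 = x := (hveq 0 (Nat.zero_le _)).trans h0
  have hkv : v (k + k') = z := (hveq' k').trans hk'
  have hstep : ∀ i < k + k', dist (v i) (v (i + 1)) ≤ ε := by
    intro i hi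
    rcases lt_or_ge i k with h | h
    · rw [hveq i h.le, hveq (i+1) (by omega)]; exact hm i h
    · obtain ⟨j, rfl⟩ := Nat.exists_eq_add_of_le h
      rw [hveq' j, show k + j + 1 = k + (j + 1) by ring, hveq' (j+1)]
      exact hm' j (by omega)
  have hsum : ∑ i ∈ Finset.range (k + k'), dist (v i) (v (i + 1)) =
      (∑ i ∈ Finset.range k, dist (w i) (w (i + 1))) +
      ∑ i ∈ Finset.range k', dist (w' i) (w' (i + 1)) := by
    rw [Finset.sum_range_add]
    congr 1
    · refine Finset.sum_congr rfl fun i hi => ?_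
      rw [Finset.mem_range] at hi
      rw [hveq i hi.le, hveq (i+1) hi]
    · refine Finset.sum_congr rfl fun i hi => ?_
      rw [hveq' i, show k + i + 1 = k + (i + 1) by ring, hveq' (i+1)]
  calc chainDist ε x z ≤ ENNReal.ofReal (∑ i ∈ Finset.range (k + k'), dist (v i) (v (i + 1))) :=
        chainDist_le _ v h0v hkv hstep
    _ = ENNReal.ofReal (∑ i ∈ Finset.range k, dist (w i) (w (i + 1))) +
        ENNReal.ofReal (∑ i ∈ Finset.range k', dist (w' i) (w' (i + 1))) := by
        rw [hsum, ENNReal.ofReal_add (Finset.sum_nonneg fun _ _ => dist_nonneg)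
          (Finset.sum_nonneg fun _ _ => dist_nonneg)]
    _ ≤ (chainDist ε x y + (η/2 : ℝ≥0)) + (chainDist ε y z + (η/2 : ℝ≥0)) :=
        add_le_add hs.le hs'.le
    _ = chainDist ε x y + chainDist ε y z + ((η/2 : ℝ≥0) + (η/2 : ℝ≥0)) := by ring
    _ = chainDist ε x y + chainDist ε y z + η := by
        norm_cast
        rw [add_halves]

lemma chainDist_comm_le (ε : ℝ) (x y : X) : chainDist ε y x ≤ chainDist ε x y := by
  refine le_iInf fun k => le_iInf fun z => le_iInf fun h0 => le_iInf fun hk =>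
    le_iInf fun hm => ?_
  set w : ℕ → X := fun i => z (k - i) with hw
  have h0' : w 0 = y := by simp [hw, hk]
  have hk' : w k = x := by simp [hw, h0]
  have hstep : ∀ i < k, dist (w i) (w (i + 1)) ≤ ε := by
    intro i hi
    have hik : k - i = k - (i+1) + 1 := by omega
    have : dist (w i) (w (i+1)) = dist (z (k - (i+1))) (z (k - (i+1) + 1)) := by
      rw [hw]
      simp only
      rw [hik, dist_comm]
    rw [this]
    exact hm _ (by omega)
  refine (chainDist_le k w h0' hk' hstep).trans (le_of_eq ?_)
  congr 1
  rw [← Finset.sum_range_reflect]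
  refine Finset.sum_congr rfl fun i hi => ?_
  rw [Finset.mem_range] at hi
  rw [hw]
  simp only
  have e1 : k - (k - 1 - i) = i + 1 := by omega
  have e2 : k - (k - 1 - i + 1) = i := by omega
  rw [e1, e2, dist_comm]

lemma chainDist_comm (ε : ℝ) (x y : X) : chainDist ε x y = chainDist ε y x :=
  le_antisymm (chainDist_comm_le ε y x) (chainDist_comm_le ε x y)

/-- A unit-speed curve of length `l` connects its endpoints with ε-chain distance `≤ l`. -/
lemma chainDist_le_of_unitSpeed {ε : ℝ} (hε : 0 < ε) {γ : ℝ → X} {l : ℝ}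
    (hγ : IsUnitSpeedCurve γ l) : chainDist ε (γ 0) (γ l) ≤ ENNReal.ofReal l := by
  obtain ⟨hl, hcont, hvar⟩ := hγ
  set n : ℕ := ⌈l / ε⌉₊ with hn
  have hn1 : 1 ≤ n := Nat.one_le_ceil_iff.2 (by positivity)
  have hnpos : (0:ℝ) < n := by exact_mod_cast hn1
  have hln : l / n ≤ ε := by
    rw [div_le_iff₀ hnpos, mul_comm]
    calc l = (l / ε) * ε := (div_mul_cancel₀ l hε.ne').symm
      _ ≤ n * ε := mul_le_mul_of_nonneg_right (Nat.le_ceil _) hε.le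
  have hln0 : 0 ≤ l / n := by positivity
  set z : ℕ → X := fun i => γ (min (i * (l / n)) l) with hz
  have hti : ∀ i : ℕ, i ≤ n → min ((i:ℝ) * (l / n)) l = (i:ℝ) * (l / n) := by
    intro i hi
    refine min_eq_left ?_
    have h1 : (i : ℝ) ≤ n := by exact_mod_cast hi
    calc (i : ℝ) * (l / n) ≤ n * (l / n) := by nlinarith
      _ = l := by rw [mul_comm, div_mul_cancel₀ l hnpos.ne']
  have h0 : z 0 = γ 0 := by simp [hz, min_eq_left hl.le]
  have hkn : z n = γ l := by
    rw [hz]; simp only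
    congr 1
    rw [hti n le_rfl, mul_comm, div_mul_cancel₀ l hnpos.ne']
  have hstep : ∀ i, i < n → dist (z i) (z (i + 1)) ≤ l / n := by
    intro i hi
    have e1 := hti i hi.le
    have e2 := hti (i+1) hi
    have hcast : ((i+1 : ℕ):ℝ) = (i:ℝ)+1 := by push_cast; ring
    have hIcc : Icc ((i:ℝ) * (l/n)) (((i:ℝ)+1) * (l/n)) ⊆ Icc 0 l := by
      apply Icc_subset_Icc
      · positivity
      · have h1' : ((i:ℝ)+1) ≤ n := by exact_mod_cast hi
        calc ((i:ℝ)+1) * (l / n) ≤ n * (l / n) := by nlinarith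
          _ = l := by rw [mul_comm, div_mul_cancel₀ l hnpos.ne']
    have hmem1 : ((i:ℝ) * (l / n)) ∈ Icc ((i:ℝ) * (l / n)) (((i:ℝ)+1) * (l / n)) := by
      constructor
      · exact le_refl _
      · nlinarith
    have hmem2 : (((i:ℝ)+1) * (l / n)) ∈ Icc ((i:ℝ) * (l / n)) (((i:ℝ)+1) * (l / n)) := by
      constructor
      · nlinarith
      · exact le_refl _
    have hedist := eVariationOn.edist_le γ hmem1 hmem2
    rw [hvar _ _ (by positivity) (by nlinarith) (by
        have h1' : ((i:ℝ)+1) ≤ n := by exact_mod_cast hi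
        calc ((i:ℝ)+1) * (l / n) ≤ n * (l / n) := by nlinarith
          _ = l := by rw [mul_comm, div_mul_cancel₀ l hnpos.ne'])] at hedist
    have : edist (z i) (z (i+1)) ≤ ENNReal.ofReal (l / n) := by
      simp only [hz]
      rw [e1, e2, hcast]
      have heq : ((i:ℝ)+1) * (l / n) - (i:ℝ) * (l / n) = l / n := by ring
      rw [heq] at hedist
      exact hedist
    rw [edist_dist] at this
    rwa [ENNReal.ofReal_le_ofReal_iff hln0] at this
  have hmesh : ∀ i, i < n → dist (z i) (z (i + 1)) ≤ ε :=
    fun i hi => (hstep i hi).trans hln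
  refine (chainDist_le n z h0 hkn hmesh).trans ?_
  apply ENNReal.ofReal_le_ofReal
  calc ∑ i ∈ Finset.range n, dist (z i) (z (i + 1)) ≤ ∑ i ∈ Finset.range n, (l / n) :=
        Finset.sum_le_sum fun i hi => hstep i (Finset.mem_range.1 hi)
    _ = n * (l / n) := by rw [Finset.sum_const, Finset.card_range]; ring
    _ = l := by rw [mul_comm, div_mul_cancel₀ l hnpos.ne']

section Trunc

/-- chain distance to `x`, truncated at `M`. -/
noncomputable def truncFn (ε M : ℝ) (x w : X) : ℝ :=
  (min (chainDist ε x w) (ENNReal.ofReal M)).toReal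

lemma truncFn_nonneg (ε M : ℝ) (x w : X) : 0 ≤ truncFn ε M x w := ENNReal.toReal_nonneg

lemma truncFn_le (ε : ℝ) {M : ℝ} (hM : 0 ≤ M) (x w : X) : truncFn ε M x w ≤ M := by
  rw [truncFn]
  calc (min (chainDist ε x w) (ENNReal.ofReal M)).toReal
      ≤ (ENNReal.ofReal M).toReal := ENNReal.toReal_mono ENNReal.ofReal_ne_top (min_le_right _ _)
    _ = M := ENNReal.toReal_ofReal hM

lemma truncFn_self {ε : ℝ} (hε : 0 ≤ ε) (M : ℝ) (x : X) : truncFn ε M x x = 0 := by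
  rw [truncFn]
  have h : chainDist ε x x = 0 := by
    have := chainDist_le_dist (ε := ε) (x := x) (y := x) (by simpa using hε)
    simpa using this
  simp [h]

lemma truncFn_sub_le (ε M : ℝ) (x a b : X) :
    truncFn ε M x b - truncFn ε M x a ≤ (min (chainDist ε a b) (ENNReal.ofReal M)).toReal := by
  have key : min (chainDist ε x b) (ENNReal.ofReal M) ≤
      min (chainDist ε x a) (ENNReal.ofReal M) + min (chainDist ε a b) (ENNReal.ofReal M) := by
    rcases le_total (chainDist ε a b) (ENNReal.ofReal M) with h | h
    · rw [min_eq_left h]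
      calc min (chainDist ε x b) (ENNReal.ofReal M)
          ≤ min (chainDist ε x a + chainDist ε a b) (ENNReal.ofReal M + chainDist ε a b) :=
            le_min ((min_le_left _ _).trans (chainDist_triangle ε x a b))
              ((min_le_right _ _).trans le_self_add)
        _ = min (chainDist ε x a) (ENNReal.ofReal M) + chainDist ε a b :=
            (min_add_add_right _ _ _)
    · rw [min_eq_right h]
      calc min (chainDist ε x b) (ENNReal.ofReal M) ≤ ENNReal.ofReal M := min_le_right _ _
        _ ≤ min (chainDist ε x a) (ENNReal.ofReal M) + ENNReal.ofReal M := le_add_self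
  have hfin : ∀ y : X, min (chainDist ε x y) (ENNReal.ofReal M) ≠ ⊤ :=
    fun y => ne_top_of_le_ne_top ENNReal.ofReal_ne_top (min_le_right _ _)
  have hfin2 : min (chainDist ε a b) (ENNReal.ofReal M) ≠ ⊤ :=
    ne_top_of_le_ne_top ENNReal.ofReal_ne_top (min_le_right _ _)
  have := ENNReal.toReal_mono (by
      exact ENNReal.add_ne_top.2 ⟨hfin a, hfin2⟩) key
  rw [ENNReal.toReal_add (hfin a) hfin2] at this
  rw [truncFn, truncFn]
  linarith

lemma abs_truncFn_sub_le (ε M : ℝ) (x a b : X) :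
    |truncFn ε M x a - truncFn ε M x b| ≤ (min (chainDist ε a b) (ENNReal.ofReal M)).toReal := by
  rw [abs_sub_le_iff]
  constructor
  · have := truncFn_sub_le ε M x b a
    rw [chainDist_comm ε b a] at this
    linarith
  · exact truncFn_sub_le ε M x a b

lemma abs_truncFn_sub_le_dist {ε M : ℝ} {a b : X} (h : dist a b ≤ ε) (x : X) :
    |truncFn ε M x a - truncFn ε M x b| ≤ dist a b := by
  refine (abs_truncFn_sub_le ε M x a b).trans ?_
  calc (min (chainDist ε a b) (ENNReal.ofReal M)).toReal
      ≤ (ENNReal.ofReal (dist a b)).toReal := by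
        refine ENNReal.toReal_mono ENNReal.ofReal_ne_top ?_
        exact (min_le_left _ _).trans (chainDist_le_dist h)
    _ = dist a b := ENNReal.toReal_ofReal dist_nonneg

lemma continuous_truncFn {ε : ℝ} (hε : 0 < ε) (M : ℝ) (x : X) :
    Continuous (truncFn ε M x) := by
  rw [Metric.continuous_iff]
  intro b η hη
  refine ⟨min ε η, lt_min hε hη, fun a ha => ?_⟩
  have hd : dist a b ≤ ε := (lt_min_iff.1 ha).1.le
  calc dist (truncFn ε M x a) (truncFn ε M x b) = |truncFn ε M x a - truncFn ε M x b| :=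
        Real.dist_eq _ _
    _ ≤ dist a b := abs_truncFn_sub_le_dist hd x
    _ < η := (lt_min_iff.1 ha).2

lemma isUpperGradient_one_truncFn [MeasurableSpace X] {ε : ℝ} (hε : 0 < ε) (M : ℝ) (x : X) :
    IsUpperGradient (fun _ => (1 : ℝ≥0∞)) (fun y => ((truncFn ε M x y : ℝ) : EReal)) := by
  refine ⟨measurable_const, fun γ l hγ => ?_⟩
  have hl : 0 < l := hγ.1
  have hcd : chainDist ε (γ 0) (γ l) ≤ ENNReal.ofReal l := chainDist_le_of_unitSpeed hε hγ
  have habs : |truncFn ε M x (γ 0) - truncFn ε M x (γ l)| ≤ l := by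
    refine (abs_truncFn_sub_le ε M x (γ 0) (γ l)).trans ?_
    calc (min (chainDist ε (γ 0) (γ l)) (ENNReal.ofReal M)).toReal
        ≤ (ENNReal.ofReal l).toReal :=
          ENNReal.toReal_mono ENNReal.ofReal_ne_top ((min_le_left _ _).trans hcd)
      _ = l := ENNReal.toReal_ofReal hl.le
  have hcoe : ((truncFn ε M x (γ 0) : ℝ) : EReal) - ((truncFn ε M x (γ l) : ℝ) : EReal)
      = ((truncFn ε M x (γ 0) - truncFn ε M x (γ l) : ℝ) : EReal) := by
    rw [EReal.coe_sub]
  have hne : ¬(((truncFn ε M x (γ 0) : ℝ) : EReal) - ((truncFn ε M x (γ l) : ℝ) : EReal) = ⊤ ∨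
      ((truncFn ε M x (γ 0) : ℝ) : EReal) - ((truncFn ε M x (γ l) : ℝ) : EReal) = ⊥) := by
    rw [hcoe]; exact not_or.2 ⟨EReal.coe_ne_top _, EReal.coe_ne_bot _⟩
  simp only [erealAbsE]
  rw [if_neg hne, hcoe, EReal.toReal_coe]
  calc ENNReal.ofReal |truncFn ε M x (γ 0) - truncFn ε M x (γ l)| ≤ ENNReal.ofReal l :=
        ENNReal.ofReal_le_ofReal habs
    _ = ∫⁻ _ in Set.Icc (0:ℝ) l, (1:ℝ≥0∞) ∂volume := by
        rw [setLIntegral_one, Real.volume_Icc, sub_zero]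

end Trunc

section PIlemma
variable [MeasurableSpace X] [BorelSpace X] {μ : Measure X}

lemma integrableOn_of_bdd {B : Set X} (hfin : μ B ≠ ⊤) {u : X → ℝ} (hu : Continuous u)
    {c : ℝ} (hc : ∀ w, |u w| ≤ c) : IntegrableOn u B μ :=
  Measure.integrableOn_of_bounded hfin (hu.aestronglyMeasurable) (ae_of_all _ hc)

lemma abs_setAverage_le {B : Set X} (h0 : μ B ≠ 0) (hfin : μ B ≠ ⊤) {u : X → ℝ}
    (hu : IntegrableOn u B μ) (hc : ∀ w ∈ B, |u w| ≤ (c : ℝ)) : |⨍ w in B, u w ∂μ| ≤ c := by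
  have hc0 : 0 ≤ c := by
    obtain ⟨w, hw⟩ := nonempty_of_measure_ne_zero h0
    exact (abs_nonneg _).trans (hc w hw)
  rw [setAverage_eq, smul_eq_mul, abs_mul, measureReal_def]
  have h1 : |∫ w in B, u w ∂μ| ≤ c * (μ B).toReal :=
    by have := norm_setIntegral_le_of_norm_le_const (f := u) hfin.lt_top (C := c) hc; rwa [measureReal_def] at this
  have h2 : |((μ B).toReal⁻¹)| = (μ B).toReal⁻¹ := abs_of_nonneg (by positivity)
  rw [h2]
  have hpos : 0 < (μ B).toReal := ENNReal.toReal_pos h0 hfin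
  rw [inv_mul_le_iff₀ hpos, mul_comm]
  exact h1

/-- The `L¹` oscillation bound coming from the Poincaré inequality with upper gradient `1`. -/
lemma PI_osc {x : X} {r C lam : ℝ} (hr : 0 < r) (hC : 0 < C) (hlam : 1 ≤ lam)
    (hμ : BallsPosFinite μ) (hp : (1:ℝ) ≤ p)
    (hPB : PoincareBall μ 1 p x r C lam)
    {u : X → ℝ} (hu : Continuous u) {c : ℝ} (hb : ∀ w, |u w| ≤ c)
    (hg : IsUpperGradient (fun _ => (1:ℝ≥0∞)) (fun y => (u y : EReal))) :
    ∫ w in ball x r, |u w - ⨍ z in ball x r, u z ∂μ| ∂μ ≤ C * r * (μ (ball x r)).toReal := by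
  have hlr : 0 < lam * r := by positivity
  have hBfin := (hμ x r hr).2.ne
  have hB0 := (hμ x r hr).1.ne'
  have hLfin := (hμ x (lam * r) hlr).2.ne
  have hL0 := (hμ x (lam * r) hlr).1.ne'
  have hIu : IntegrableOn u (ball x (lam * r)) μ := integrableOn_of_bdd hLfin hu hb
  have H := hPB u (fun _ => 1) hIu hg
  have hRHS : ((∫⁻ y in ball x (lam * r), (fun _ => (1:ℝ≥0∞)) y ^ p ∂μ) /
      μ (ball x (lam * r))) ^ (1/p) = 1 := by
    simp only [ENNReal.one_rpow]
    rw [setLIntegral_one, ENNReal.div_self hL0 hLfin, ENNReal.one_rpow]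
  rw [hRHS, mul_one] at H
  have hq : (1:ℝ)/1 = 1 := by norm_num
  rw [hq, ENNReal.rpow_one] at H
  have hLHSq : (∫⁻ y in ball x r,
      ENNReal.ofReal |u y - ⨍ z in ball x r, u z ∂μ| ^ (1:ℝ) ∂μ) =
      ∫⁻ y in ball x r, ENNReal.ofReal |u y - ⨍ z in ball x r, u z ∂μ| ∂μ := by
    simp [ENNReal.rpow_one]
  rw [hLHSq] at H
  rw [ENNReal.div_le_iff hB0 hBfin] at H
  set c0 := ⨍ z in ball x r, u z ∂μ with hc0
  have hIu' : IntegrableOn (fun w => |u w - c0|) (ball x r) μ := by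
    have : IntegrableOn u (ball x r) μ :=
      integrableOn_of_bdd hBfin hu hb
    exact (this.sub (integrableOn_const (hμ x r hr).2.ne)).abs
  have hofReal : (∫⁻ y in ball x r, ENNReal.ofReal |u y - c0| ∂μ) =
      ENNReal.ofReal (∫ w in ball x r, |u w - c0| ∂μ) :=
    (ofReal_integral_eq_lintegral_ofReal hIu' (ae_of_all _ fun w => abs_nonneg _)).symm
  rw [hofReal] at H
  have := ENNReal.toReal_mono (by
      exact ENNReal.mul_ne_top ENNReal.ofReal_ne_top hBfin) H
  rw [ENNReal.toReal_ofReal (integral_nonneg fun w => abs_nonneg _)] at this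
  rw [ENNReal.toReal_mul, ENNReal.toReal_ofReal (by positivity)] at this
  exact this

/-- Comparison of averages over nested sets. -/
lemma avg_diff {B' B : Set X} (hsub : B' ⊆ B) (h0 : μ B' ≠ 0) (hfin' : μ B' ≠ ⊤)
    (hfinB : μ B ≠ ⊤) {u : X → ℝ} (hu : IntegrableOn u B μ) :
    |(⨍ w in B', u w ∂μ) - ⨍ w in B, u w ∂μ| ≤
      (∫ w in B, |u w - ⨍ z in B, u z ∂μ| ∂μ) / (μ B').toReal := by
  set c0 := ⨍ z in B, u z ∂μ with hc0
  have hu' : IntegrableOn u B' μ := hu.mono_set hsub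
  have hconst : IntegrableOn (fun _ => c0) B' μ :=
    integrableOn_const hfin'
  have hm : (μ B').toReal ≠ 0 := (ENNReal.toReal_pos h0 hfin').ne'
  have hsubint : ∫ w in B', (u w - c0) ∂μ = (∫ w in B', u w ∂μ) - (μ B').toReal * c0 := by
    rw [integral_sub hu' hconst, setIntegral_const, smul_eq_mul, measureReal_def]
  have havg : (⨍ w in B', u w ∂μ) - c0 = ⨍ w in B', (u w - c0) ∂μ := by
    rw [setAverage_eq, setAverage_eq, measureReal_def, hsubint, smul_eq_mul, smul_eq_mul, mul_sub]
    have : (μ B').toReal⁻¹ * ((μ B').toReal * c0) = c0 := by field_simp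
    rw [this]
  rw [havg]
  have habs : |⨍ w in B', (u w - c0) ∂μ| ≤ (μ B').toReal⁻¹ * |∫ w in B', (u w - c0) ∂μ| := by
    rw [setAverage_eq, smul_eq_mul, abs_mul, measureReal_def, abs_of_nonneg (inv_nonneg.2 ENNReal.toReal_nonneg)]
  refine habs.trans ?_
  rw [div_eq_inv_mul]
  refine mul_le_mul_of_nonneg_left ?_ (inv_nonneg.2 ENNReal.toReal_nonneg)
  have h1 : |∫ w in B', (u w - c0) ∂μ| ≤ ∫ w in B', |u w - c0| ∂μ :=
    by simpa [Real.norm_eq_abs] using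
      norm_integral_le_integral_norm (μ := μ.restrict B') (fun w => u w - c0)
  refine h1.trans ?_
  refine setIntegral_mono_set ((hu.sub (integrableOn_const hfinB)).abs)
    (ae_of_all _ fun w => abs_nonneg _) (HasSubset.Subset.eventuallyLE hsub)

end PIlemma

section LemmaA
variable [MeasurableSpace X] [BorelSpace X]

lemma setAverage_sub_const {μ : Measure X} {B : Set X} (h0 : μ B ≠ 0) (hfin : μ B ≠ ⊤)
    {u : X → ℝ} (hu : IntegrableOn u B μ) (c : ℝ) :
    ⨍ w in B, (u w - c) ∂μ = (⨍ w in B, u w ∂μ) - c := by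
  have hm : (μ B).toReal ≠ 0 := (ENNReal.toReal_pos h0 hfin).ne'
  have hconst : IntegrableOn (fun _ => c) B μ := integrableOn_const hfin
  have hsubint : ∫ w in B, (u w - c) ∂μ = (∫ w in B, u w ∂μ) - (μ B).toReal * c := by
    rw [integral_sub hu hconst, setIntegral_const, smul_eq_mul, measureReal_def]
  rw [setAverage_eq, setAverage_eq, measureReal_def, hsubint, smul_eq_mul, smul_eq_mul, mul_sub]
  have : (μ B).toReal⁻¹ * ((μ B).toReal * c) = c := by field_simp
  rw [this]

/-- The key estimate: the chain distance is controlled by the metric near every point,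
uniformly in the chain scale ε. -/
lemma chainDist_le_mul_dist (μ : Measure X) (hμ : BallsPosFinite μ) {p : ℝ} (hp : 1 ≤ p)
    (x0 : X) {r1 : ℝ} (hr1 : 0 < r1) {D : ℝ≥0} (hD : DoublingWithin μ x0 r1 D)
    {r2 C lam : ℝ} (hr2 : 0 < r2) (hC : 0 < C) (hlam : 1 ≤ lam)
    (hPI : PoincareWithin μ 1 p x0 r2 C lam) :
    ∃ s L : ℝ, 0 < s ∧ 0 < L ∧ ∀ ε > 0, ∀ x ∈ ball x0 s, ∀ y ∈ ball x0 s,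
      chainDist ε x y ≤ ENNReal.ofReal (L * dist x y) := by
  set R := min r1 r2 with hR
  have hR0 : 0 < R := lt_min hr1 hr2
  set s := R / 100 with hs
  have hs0 : 0 < s := by positivity
  set Dr := (D : ℝ) with hDr
  have hDr0 : 0 ≤ Dr := D.coe_nonneg
  set L0 := 6 * C * Dr + 2 * C * Dr ^ 2 with hL0
  have hL00 : 0 ≤ L0 := by positivity
  set L := L0 + 1 with hL
  have hLpos : 0 < L := by positivity
  refine ⟨s, L, hs0, hLpos, ?_⟩
  intro ε hε x hx y hy
  rcases eq_or_ne x y with rfl | hxy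
  · simp [chainDist_self]
  set δ := dist x y with hδdef
  have hδ : 0 < δ := dist_pos.2 hxy
  have hδ2 : δ < 2 * s := by
    rw [mem_ball] at hx hy
    calc δ ≤ dist x x0 + dist x0 y := dist_triangle _ _ _
      _ = dist x x0 + dist y x0 := by rw [dist_comm x0 y]
      _ < s + s := add_lt_add hx hy
      _ = 2 * s := by ring
  set M := L * δ with hM
  have hM0 : 0 < M := by positivity
  set u := truncFn ε M x with hu
  have hub : ∀ w, |u w| ≤ M := fun w => by
    rw [abs_of_nonneg (truncFn_nonneg _ _ _ _)]; exact truncFn_le ε hM0.le x w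
  have hcont : Continuous u := continuous_truncFn hε M x
  have hug : IsUpperGradient (fun _ => (1:ℝ≥0∞)) (fun w => ((u w : ℝ) : EReal)) :=
    isUpperGradient_one_truncFn hε M x
  have hux : u x = 0 := truncFn_self hε.le M x
  -- ball inclusions
  have hsub : ∀ (w : X), dist x0 w < s → ∀ t : ℝ, t ≤ 8 * s → ball w t ⊆ ball x0 R := by
    intro w hw t ht v hv
    rw [mem_ball] at hv ⊢
    have : dist v x0 ≤ dist v w + dist w x0 := dist_triangle _ _ _
    rw [dist_comm w x0] at this
    have h9 : (9:ℝ) * s ≤ R := by rw [hs]; linarith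
    calc dist v x0 ≤ dist v w + dist x0 w := this
      _ < t + s := add_lt_add_of_lt_of_le hv hw.le
      _ ≤ 8 * s + s := by linarith
      _ = 9 * s := by ring
      _ ≤ R := h9
  -- uniform step estimate between concentric balls
  have step : ∀ (w : X) (t : ℝ), 0 < t → dist x0 w < s → t ≤ 4 * s →
      |(⨍ v in ball w t, u v ∂μ) - ⨍ v in ball w (2*t), u v ∂μ| ≤ C * (2*t) * Dr := by
    intro w t ht hw h8
    have h2t : 0 < 2 * t := by linarith
    have hsub1 : ball w t ⊆ ball x0 R := hsub w hw t (by linarith)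
    have hsub2 : ball w (2*t) ⊆ ball x0 R := hsub w hw (2*t) (by linarith)
    have hfin1 := (hμ w t ht).2.ne
    have h01 := (hμ w t ht).1.ne'
    have hfin2 := (hμ w (2*t) h2t).2.ne
    have h02 := (hμ w (2*t) h2t).1.ne'
    have hPB : PoincareBall μ 1 p w (2*t) C lam :=
      hPI w (2*t) h2t (hsub2.trans (ball_subset_ball (min_le_right _ _)))
    have hosc := PI_osc h2t hC hlam hμ hp hPB hcont hub hug
    have hIu : IntegrableOn u (ball w (2*t)) μ := integrableOn_of_bdd hfin2 hcont hub
    have hdiff := avg_diff (ball_subset_ball (by linarith)) h01 hfin1 hfin2 hIu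
    have hdbl : μ (ball w (2*t)) ≤ (D : ℝ≥0∞) * μ (ball w t) :=
      hD w t ht (hsub1.trans (ball_subset_ball (min_le_left _ _)))
    have hdblR : (μ (ball w (2*t))).toReal ≤ Dr * (μ (ball w t)).toReal := by
      have := ENNReal.toReal_mono (by
          exact ENNReal.mul_ne_top ENNReal.coe_ne_top hfin1) hdbl
      rwa [ENNReal.toReal_mul, ENNReal.coe_toReal] at this
    have hm1 : 0 < (μ (ball w t)).toReal := ENNReal.toReal_pos h01 hfin1
    refine hdiff.trans ?_
    rw [div_le_iff₀ hm1]
    calc ∫ v in ball w (2*t), |u v - ⨍ z in ball w (2*t), u z ∂μ| ∂μ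
        ≤ C * (2*t) * (μ (ball w (2*t))).toReal := hosc
      _ ≤ C * (2*t) * (Dr * (μ (ball w t)).toReal) := by
          refine mul_le_mul_of_nonneg_left hdblR (by positivity)
      _ = C * (2*t) * Dr * (μ (ball w t)).toReal := by ring
  -- convergence of averages to the point value
  have hlim : ∀ (w : X) (c : ℝ), 0 < c → dist x0 w < s →
      Tendsto (fun i : ℕ => ⨍ v in ball w (c * (1/2)^i), u v ∂μ) atTop (𝓝 (u w)) := by
    intro w c hc hw
    rw [Metric.tendsto_atTop]
    intro η hη
    obtain ⟨N, hN⟩ : ∃ N : ℕ, c * (1/2:ℝ)^N < min ε η := by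
      obtain ⟨N, hN⟩ := exists_pow_lt_of_lt_one (x := min ε η / c) (y := (1/2:ℝ))
        (by positivity) (by norm_num)
      exact ⟨N, by rw [mul_comm]; exact (lt_div_iff₀ hc).1 hN⟩
    refine ⟨N, fun i hi => ?_⟩
    set t := c * (1/2:ℝ)^i with hti
    have ht : 0 < t := by positivity
    have htN : t ≤ c * (1/2:ℝ)^N := by
      refine mul_le_mul_of_nonneg_left (pow_le_pow_of_le_one (by norm_num) (by norm_num) hi)
        hc.le
    have htε : t < ε := lt_of_le_of_lt htN (hN.trans_le (min_le_left _ _))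
    have htη : t < η := lt_of_le_of_lt htN (hN.trans_le (min_le_right _ _))
    have hfin := (hμ w t ht).2.ne
    have h0 := (hμ w t ht).1.ne'
    have hIu : IntegrableOn u (ball w t) μ := integrableOn_of_bdd hfin hcont hub
    have hIu' : IntegrableOn (fun v => u v - u w) (ball w t) μ :=
      hIu.sub (integrableOn_const hfin)
    have hbd : ∀ v ∈ ball w t, |u v - u w| ≤ t := by
      intro v hv
      rw [mem_ball] at hv
      have : |u v - u w| ≤ dist v w := abs_truncFn_sub_le_dist (le_of_lt (hv.trans_le htε.le)) x
      exact this.trans hv.le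
    have := abs_setAverage_le h0 hfin hIu' hbd
    rw [setAverage_sub_const h0 hfin hIu (u w)] at this
    rw [Real.dist_eq]
    exact lt_of_le_of_lt this htη
  -- telescoping at x
  set a : ℕ → ℝ := fun i => ⨍ v in ball x (2*δ * (1/2)^i), u v ∂μ with ha
  set b : ℕ → ℝ := fun i => ⨍ v in ball y (δ * (1/2)^i), u v ∂μ with hb
  have hxd : dist x0 x < s := by rw [mem_ball, dist_comm] at hx; exact hx
  have hyd : dist x0 y < s := by rw [mem_ball, dist_comm] at hy; exact hy
  have hstepa : ∀ n : ℕ, dist (a n) (a (n+1)) ≤ (2*C*Dr*δ) * (1/2)^n := by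
    intro n
    have ht : (0:ℝ) < δ * (1/2)^n := by positivity
    have h4 : δ * (1/2:ℝ)^n ≤ 4 * s := by
      have : δ * (1/2:ℝ)^n ≤ δ := by
        nlinarith [pow_le_one₀ (by norm_num : (0:ℝ) ≤ 1/2) (by norm_num : (1/2:ℝ) ≤ 1) (n := n), hδ.le]
      linarith
    have hstep' := step x (δ * (1/2)^n) ht hxd h4
    have ea1 : a (n+1) = ⨍ v in ball x (δ * (1/2)^n), u v ∂μ := by
      rw [ha]; simp only
      rw [show 2*δ*(1/2:ℝ)^(n+1) = δ*(1/2)^n by ring]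
    have ea0 : a n = ⨍ v in ball x (2*(δ * (1/2)^n)), u v ∂μ := by
      rw [ha]; simp only
      rw [show (2:ℝ)*(δ*(1/2:ℝ)^n) = 2*δ*(1/2)^n by ring]
    rw [Real.dist_eq, abs_sub_comm, ea1, ea0]
    calc |(⨍ v in ball x (δ * (1/2)^n), u v ∂μ) - ⨍ v in ball x (2*(δ * (1/2)^n)), u v ∂μ|
        ≤ C * (2*(δ * (1/2)^n)) * Dr := hstep'
      _ = (2*C*Dr*δ) * (1/2)^n := by ring
  have hstepb : ∀ n : ℕ, dist (b n) (b (n+1)) ≤ (C*Dr*δ) * (1/2)^n := by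
    intro n
    have ht : (0:ℝ) < δ/2 * (1/2)^n := by positivity
    have h4 : δ/2 * (1/2:ℝ)^n ≤ 4 * s := by
      have : δ/2 * (1/2:ℝ)^n ≤ δ := by
        nlinarith [pow_le_one₀ (by norm_num : (0:ℝ) ≤ 1/2) (by norm_num : (1/2:ℝ) ≤ 1) (n := n), hδ.le]
      linarith
    have hstep' := step y (δ/2 * (1/2)^n) ht hyd h4
    have eb1 : b (n+1) = ⨍ v in ball y (δ/2 * (1/2)^n), u v ∂μ := by
      rw [hb]; simp only
      rw [show δ*(1/2:ℝ)^(n+1) = δ/2*(1/2)^n by ring]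
    have eb0 : b n = ⨍ v in ball y (2*(δ/2 * (1/2)^n)), u v ∂μ := by
      rw [hb]; simp only
      rw [show (2:ℝ)*(δ/2*(1/2:ℝ)^n) = δ*(1/2)^n by ring]
    rw [Real.dist_eq, abs_sub_comm, eb1, eb0]
    calc |(⨍ v in ball y (δ/2 * (1/2)^n), u v ∂μ) - ⨍ v in ball y (2*(δ/2 * (1/2)^n)), u v ∂μ|
        ≤ C * (2*(δ/2 * (1/2)^n)) * Dr := hstep'
      _ = (C*Dr*δ) * (1/2)^n := by ring
  have hlima : Tendsto a atTop (𝓝 0) := by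
    rw [← hux]
    exact hlim x (2*δ) (by positivity) hxd
  have hlimb : Tendsto b atTop (𝓝 (u y)) := hlim y δ hδ hyd
  have hgeo1 : |a 0 - 0| ≤ (2*C*Dr*δ) / (1 - 1/2) := by
    have := dist_le_of_le_geometric_of_tendsto₀ (r := 1/2) (C := 2*C*Dr*δ)
      (by norm_num) hstepa hlima
    rwa [Real.dist_eq] at this
  have hgeo2 : |b 0 - u y| ≤ (C*Dr*δ) / (1 - 1/2) := by
    have := dist_le_of_le_geometric_of_tendsto₀ (r := 1/2) (C := C*Dr*δ)
      (by norm_num) hstepb hlimb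
    rwa [Real.dist_eq] at this
  -- middle comparison
  have hmid : |b 0 - a 0| ≤ 2 * C * Dr^2 * δ := by
    have h2δ : (0:ℝ) < 2*δ := by linarith
    have h4δ : (0:ℝ) < 4*δ := by linarith
    have hsubyx : ball y δ ⊆ ball x (2*δ) := by
      intro v hv
      rw [mem_ball] at hv ⊢
      calc dist v x ≤ dist v y + dist y x := dist_triangle _ _ _
        _ < δ + δ := by rw [dist_comm y x]; exact add_lt_add_of_lt_of_le hv le_rfl
        _ = 2*δ := by ring
    have hsubx : ball x (2*δ) ⊆ ball x0 R := hsub x hxd (2*δ) (by linarith)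
    have hfinx := (hμ x (2*δ) h2δ).2.ne
    have h0y := (hμ y δ hδ).1.ne'
    have hfiny := (hμ y δ hδ).2.ne
    have hPB : PoincareBall μ 1 p x (2*δ) C lam :=
      hPI x (2*δ) h2δ (hsubx.trans (ball_subset_ball (min_le_right _ _)))
    have hosc := PI_osc h2δ hC hlam hμ hp hPB hcont hub hug
    have hIu : IntegrableOn u (ball x (2*δ)) μ := integrableOn_of_bdd hfinx hcont hub
    have hdiff := avg_diff hsubyx h0y hfiny hfinx hIu
    -- measure comparison: μ(B(x,2δ)) ≤ D^2 μ(B(y,δ))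
    have hmono1 : μ (ball x (2*δ)) ≤ μ (ball y (4*δ)) := by
      refine measure_mono ?_
      intro v hv
      rw [mem_ball] at hv ⊢
      calc dist v y ≤ dist v x + dist x y := dist_triangle _ _ _
        _ < 2*δ + δ := add_lt_add_of_lt_of_le hv le_rfl
        _ ≤ 4*δ := by linarith
    have hdbl1 : μ (ball y (4*δ)) ≤ (D:ℝ≥0∞) * μ (ball y (2*δ)) := by
      have := hD y (2*δ) h2δ ((hsub y hyd (2*δ) (by linarith)).trans
        (ball_subset_ball (min_le_left _ _)))
      rwa [show (2:ℝ) * (2*δ) = 4*δ by ring] at this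
    have hdbl2 : μ (ball y (2*δ)) ≤ (D:ℝ≥0∞) * μ (ball y δ) :=
      hD y δ hδ ((hsub y hyd δ (by linarith)).trans (ball_subset_ball (min_le_left _ _)))
    have hcomp : μ (ball x (2*δ)) ≤ (D:ℝ≥0∞) * ((D:ℝ≥0∞) * μ (ball y δ)) :=
      hmono1.trans (hdbl1.trans (mul_le_mul_right hdbl2 _))
    have hcompR : (μ (ball x (2*δ))).toReal ≤ Dr * (Dr * (μ (ball y δ)).toReal) := by
      have hne : ((D:ℝ≥0∞) * ((D:ℝ≥0∞) * μ (ball y δ))) ≠ ⊤ :=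
        ENNReal.mul_ne_top ENNReal.coe_ne_top (ENNReal.mul_ne_top ENNReal.coe_ne_top hfiny)
      have := ENNReal.toReal_mono hne hcomp
      rwa [ENNReal.toReal_mul, ENNReal.toReal_mul, ENNReal.coe_toReal] at this
    have hmy : 0 < (μ (ball y δ)).toReal := ENNReal.toReal_pos h0y hfiny
    have eb0 : b 0 = ⨍ v in ball y δ, u v ∂μ := by
      rw [hb]; simp only
      rw [show δ*(1/2:ℝ)^0 = δ by norm_num]
    have ea0 : a 0 = ⨍ v in ball x (2*δ), u v ∂μ := by
      rw [ha]; simp only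
      rw [show 2*δ*(1/2:ℝ)^0 = 2*δ by norm_num]
    rw [eb0, ea0]
    refine hdiff.trans ?_
    rw [div_le_iff₀ hmy]
    calc ∫ v in ball x (2*δ), |u v - ⨍ z in ball x (2*δ), u z ∂μ| ∂μ
        ≤ C * (2*δ) * (μ (ball x (2*δ))).toReal := hosc
      _ ≤ C * (2*δ) * (Dr * (Dr * (μ (ball y δ)).toReal)) :=
          mul_le_mul_of_nonneg_left hcompR (by positivity)
      _ = 2 * C * Dr^2 * δ * (μ (ball y δ)).toReal := by ring
  -- combine
  have huy : u y ≤ L0 * δ := by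
    have h1 : |a 0| ≤ 4*C*Dr*δ := by
      have : (2*C*Dr*δ) / (1 - 1/2 : ℝ) = 4*C*Dr*δ := by norm_num; ring
      rw [sub_zero] at hgeo1
      linarith [hgeo1, this.le]
    have h2 : |b 0 - u y| ≤ 2*C*Dr*δ := by
      have : (C*Dr*δ) / (1 - 1/2 : ℝ) = 2*C*Dr*δ := by norm_num; ring
      linarith [hgeo2, this.le]
    have : u y ≤ |u y - b 0| + |b 0 - a 0| + |a 0| := by
      have habs : |u y| ≤ |u y - b 0| + |b 0 - a 0| + |a 0| := by
        calc |u y| = |(u y - b 0) + (b 0 - a 0) + a 0| := by ring_nf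
          _ ≤ |u y - b 0| + |b 0 - a 0| + |a 0| := by
              refine (abs_add_le _ _).trans ?_
              exact add_le_add (abs_add_le _ _) le_rfl
      exact (le_abs_self _).trans habs
    rw [abs_sub_comm] at h2
    calc u y ≤ |u y - b 0| + |b 0 - a 0| + |a 0| := this
      _ ≤ 2*C*Dr*δ + 2*C*Dr^2*δ + 4*C*Dr*δ := by
          exact add_le_add (add_le_add h2 hmid) h1
      _ = L0 * δ := by rw [hL0]; ring
  have huyM : u y < M := by
    rw [hM, hL]
    calc u y ≤ L0 * δ := huy
      _ < (L0 + 1) * δ := by nlinarith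
  -- untruncate
  have hlt : chainDist ε x y < ENNReal.ofReal M := by
    by_contra h
    push_neg at h
    have : u y = M := by
      rw [hu, truncFn, min_eq_right h, ENNReal.toReal_ofReal hM0.le]
    linarith [huyM, this.ge]
  have hmin : min (chainDist ε x y) (ENNReal.ofReal M) = chainDist ε x y := min_eq_left hlt.le
  have hne : chainDist ε x y ≠ ⊤ := (hlt.trans_le le_top).ne
  have : chainDist ε x y = ENNReal.ofReal (u y) := by
    rw [hu, truncFn, hmin, ENNReal.ofReal_toReal hne]
  rw [this]
  refine ENNReal.ofReal_le_ofReal ?_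
  calc u y ≤ L0 * δ := huy
    _ ≤ L * δ := by rw [hL]; nlinarith
end LemmaA


section AuxCurve
lemma dist_le_sum_chain' (z : ℕ → X) :
    ∀ i j, i ≤ j →
      dist (z i) (z j) ≤ ∑ m ∈ Finset.range (j - i), dist (z (i + m)) (z (i + m + 1)) := by
  intro i j hij
  obtain ⟨n, rfl⟩ := Nat.exists_eq_add_of_le hij
  induction n with
  | zero => simp
  | succ n ih =>
    have h : dist (z i) (z (i + (n+1))) ≤ dist (z i) (z (i + n)) + dist (z (i + n)) (z (i + n + 1)) := by
      rw [show i + (n+1) = i + n + 1 by ring]; exact dist_triangle _ _ _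
    refine h.trans ?_
    rw [show i + (n+1) - i = n + 1 by omega, Finset.sum_range_succ]
    have := ih (by omega)
    rw [show i + n - i = n by omega] at this
    linarith

/-- Piecewise-constant parameterization of a chain. -/
lemma discrete_curve (k : ℕ) (z : ℕ → X) {m : ℝ} (hm0 : 0 ≤ m)
    (hmesh : ∀ i < k, dist (z i) (z (i + 1)) ≤ m) :
    ∃ f : ℝ → X, f 0 = z 0 ∧ f 1 = z k ∧ (∀ t, ∃ i ≤ k, f t = z i) ∧
      ∀ s t : ℝ, 0 ≤ s → s ≤ t → t ≤ 1 →
        dist (f s) (f t) ≤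
          (∑ i ∈ Finset.range k, dist (z i) (z (i + 1))) * (t - s) + m := by
  set σ : ℕ → ℝ := fun i => ∑ j ∈ Finset.range i, dist (z j) (z (j + 1)) with hσ
  set S : ℝ := σ k with hSdef
  have hS0 : 0 ≤ S := Finset.sum_nonneg fun _ _ => dist_nonneg
  have hσ0 : σ 0 = 0 := by simp [hσ]
  have hσnonneg : ∀ i, 0 ≤ σ i := fun i => Finset.sum_nonneg fun _ _ => dist_nonneg
  have hσmono : Monotone σ := by
    intro i j hij
    exact Finset.sum_le_sum_of_subset_of_nonneg (Finset.range_subset_range.2 hij)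
      (fun _ _ _ => dist_nonneg)
  have hσsucc : ∀ i, σ (i + 1) = σ i + dist (z i) (z (i + 1)) := by
    intro i; rw [hσ]; simp only; rw [Finset.sum_range_succ]
  have hdistσ : ∀ i j, i ≤ j → dist (z i) (z j) ≤ σ j - σ i := by
    intro i j hij
    have h1 := dist_le_sum_chain' z i j hij
    have h2 : σ j = σ i + ∑ m ∈ Finset.range (j - i), dist (z (i + m)) (z (i + m + 1)) := by
      conv_lhs => rw [show j = i + (j - i) by omega]
      rw [hσ]; simp only
      rw [Finset.sum_range_add]
    linarith
  have hPne : ∀ t : ℝ, 0 ≤ t →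
      ((Finset.range (k+1)).filter (fun i => σ i ≤ S * t)).Nonempty := by
    intro t ht
    exact ⟨0, Finset.mem_filter.2 ⟨Finset.mem_range.2 (by omega), by rw [hσ0]; positivity⟩⟩
  classical
  set f : ℝ → X := fun t =>
    if h : ((Finset.range (k+1)).filter (fun i => σ i ≤ S * t)).Nonempty
    then z (Finset.max' _ h) else z 0 with hf
  have hidx : ∀ t : ℝ, 0 ≤ t → ∃ i, i ≤ k ∧ σ i ≤ S * t ∧ f t = z i ∧
      (∀ i' ∈ Finset.range (k+1), σ i' ≤ S * t → i' ≤ i) := by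
    intro t ht
    have hne := hPne t ht
    set i := Finset.max' _ hne with hi
    have hmem := Finset.max'_mem _ hne
    rw [Finset.mem_filter, Finset.mem_range] at hmem
    refine ⟨i, by omega, hmem.2, ?_, ?_⟩
    · rw [hf]; simp only; rw [dif_pos hne]
    · intro i' hr hσ'
      exact Finset.le_max' _ i' (Finset.mem_filter.2 ⟨hr, hσ'⟩)
  have main : ∀ s t : ℝ, 0 ≤ s → s ≤ t → t ≤ 1 →
      dist (f s) (f t) ≤ S * (t - s) + m := by
    intro s t hs hst ht1
    have ht : 0 ≤ t := hs.trans hst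
    obtain ⟨i, hik, hσi, hfi, hmaxi⟩ := hidx s hs
    obtain ⟨j, hjk, hσj, hfj, hmaxj⟩ := hidx t ht
    have hij : i ≤ j := hmaxj i (Finset.mem_range.2 (by omega))
      (hσi.trans (by nlinarith))
    have hσilow : S * s - m ≤ σ i := by
      rcases eq_or_lt_of_le hik with h | h
      · subst h
        have : S * s ≤ S := by nlinarith
        rw [← hSdef] at *
        linarith
      · by_contra hcon
        push_neg at hcon
        have hi1 : σ (i+1) ≤ S * s := by
          rw [hσsucc i]
          have := hmesh i h
          linarith
        have := hmaxi (i+1) (Finset.mem_range.2 (by omega)) hi1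
        omega
    have hd := hdistσ i j hij
    rw [hfi, hfj]
    have hσjt : σ j ≤ S * t := hσj
    calc dist (z i) (z j) ≤ σ j - σ i := hd
      _ ≤ S * t - (S * s - m) := by linarith
      _ = S * (t - s) + m := by ring
  obtain ⟨i0, hi0k, hσi0, hfi0, _⟩ := hidx 0 le_rfl
  have hf0 : f 0 = z 0 := by
    rw [hfi0]
    have : σ i0 = 0 := le_antisymm (by simpa using hσi0) (hσnonneg i0)
    have hd := hdistσ 0 i0 (Nat.zero_le _)
    rw [hσ0, this] at hd
    simp only [sub_zero] at hd
    have : dist (z 0) (z i0) ≤ 0 := by simpa using hd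
    have := le_antisymm this dist_nonneg
    rw [dist_eq_zero] at this
    exact this.symm
  have hf1 : f 1 = z k := by
    obtain ⟨j, hjk, hσj, hfj, hmaxj⟩ := hidx 1 zero_le_one
    have hkj : k ≤ j := hmaxj k (Finset.mem_range.2 (by omega)) (by rw [← hSdef]; linarith)
    have : j = k := le_antisymm hjk hkj
    rw [hfj, this]
  refine ⟨f, hf0, hf1, ?_, main⟩
  intro t
  rcases le_or_gt 0 t with ht | ht
  · obtain ⟨i, hik, _, hfi, _⟩ := hidx t ht
    exact ⟨i, hik, hfi⟩
  · rw [hf]; simp only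
    by_cases h : ((Finset.range (k+1)).filter (fun i => σ i ≤ S * t)).Nonempty
    · rw [dif_pos h]
      have hmem := Finset.max'_mem _ h
      rw [Finset.mem_filter, Finset.mem_range] at hmem
      exact ⟨_, by omega, rfl⟩
    · rw [dif_neg h]; exact ⟨0, Nat.zero_le _, rfl⟩

lemma proj_lemma : ∀ s t : ℝ, s ≤ t →
    0 ≤ max 0 (min s 1) ∧ max 0 (min s 1) ≤ max 0 (min t 1) ∧ max 0 (min t 1) ≤ 1 ∧
      max 0 (min t 1) - max 0 (min s 1) ≤ t - s := by
  intro s t hst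
  refine ⟨le_max_left _ _, ?_, ?_, ?_⟩
  · exact max_le_max le_rfl (min_le_min (by linarith) le_rfl)
  · exact max_le zero_le_one (min_le_right _ _)
  · rcases le_total s 1 with h1 | h1 <;> rcases le_total t 1 with h2 | h2 <;>
      rcases le_total s 0 with h3 | h3 <;> rcases le_total t 0 with h4 | h4 <;>
      simp [min_eq_left, min_eq_right, max_eq_left, max_eq_right, *] <;> linarith

lemma chains_to_curve (x y : X) (c : ℝ) (hc : 0 ≤ c) (K : Set X) (hK : IsCompact K)
    (H : ∀ n : ℕ, ∃ (k : ℕ) (z : ℕ → X), z 0 = x ∧ z k = y ∧ (∀ i ≤ k, z i ∈ K) ∧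
      (∀ i < k, dist (z i) (z (i + 1)) ≤ 1 / (n + 1)) ∧
      (∑ i ∈ Finset.range k, dist (z i) (z (i + 1))) ≤ c + 1 / (n + 1)) :
    ∃ γ : ℝ → X, ConnectsInWithLength γ x y Set.univ (ENNReal.ofReal c) := by
  classical
  -- the family of approximating piecewise-constant curves
  have Hf : ∀ n : ℕ, ∃ f : ℝ → X, f 0 = x ∧ f 1 = y ∧ (∀ t, f t ∈ K) ∧
      ∀ s t : ℝ, 0 ≤ s → s ≤ t → t ≤ 1 →
        dist (f s) (f t) ≤ (c + 1/(n+1)) * (t - s) + 1/(n+1) := by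
    intro n
    obtain ⟨k, z, hz0, hzk, hzK, hmesh, hsum⟩ := H n
    have hmn : (0:ℝ) ≤ 1/(n+1) := by positivity
    obtain ⟨f, hf0, hf1, hfr, hflip⟩ := discrete_curve k z hmn hmesh
    refine ⟨f, hf0.trans hz0, hf1.trans hzk, ?_, ?_⟩
    · intro t; obtain ⟨i, hik, hfi⟩ := hfr t; rw [hfi]; exact hzK i hik
    · intro s t hs hst ht1
      refine (hflip s t hs hst ht1).trans ?_
      have : (∑ i ∈ Finset.range k, dist (z i) (z (i + 1))) * (t - s) ≤
          (c + 1/(n+1)) * (t - s) := by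
        refine mul_le_mul_of_nonneg_right hsum (by linarith)
      linarith
  choose f hf0 hf1 hfK hfd using Hf
  -- the reparameterized (clamped) curves
  set g : ℕ → ℝ → X := fun n t => f n (max 0 (min t 1)) with hg
  have hg0 : ∀ n, g n 0 = x := by intro n; rw [hg]; simp only; norm_num; exact hf0 n
  have hg1 : ∀ n, g n 1 = y := by intro n; rw [hg]; simp only; norm_num; exact hf1 n
  have hgK : ∀ n t, g n t ∈ K := fun n t => hfK n _
  have hgd : ∀ (n : ℕ) (s t : ℝ), s ≤ t →
      dist (g n s) (g n t) ≤ (c + 1/(n+1)) * (t - s) + 1/(n+1) := by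
    intro n s t hst
    obtain ⟨h1, h2, h3, h4⟩ := proj_lemma s t hst
    refine (hfd n _ _ h1 h2 h3).trans ?_
    have hc1 : (0:ℝ) ≤ c + 1/(n+1) := by positivity
    nlinarith
  -- pass to an ultrafilter limit
  set 𝒰 : Ultrafilter ℕ := Ultrafilter.of atTop with h𝒰def
  have h𝒰 : (𝒰 : Filter ℕ) ≤ atTop := Ultrafilter.of_le _
  have hlim : ∀ t : ℝ, ∃ a ∈ K, Tendsto (fun n => g n t) 𝒰 (𝓝 a) := by
    intro t
    have hle : (↑(Ultrafilter.map (fun n => g n t) 𝒰) : Filter X) ≤ 𝓟 K := by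
      rw [Ultrafilter.coe_map]
      exact le_principal_iff.2 (Filter.mem_map.2 (Filter.univ_mem' (fun n => hgK n t)))
    obtain ⟨a, haK, ha⟩ := hK.ultrafilter_le_nhds (Ultrafilter.map (fun n => g n t) 𝒰) hle
    rw [Ultrafilter.coe_map] at ha
    exact ⟨a, haK, ha⟩
  choose γ hγK hγ using hlim
  -- Lipschitz estimate for the limit
  have hlip : ∀ s t : ℝ, s ≤ t → dist (γ s) (γ t) ≤ c * (t - s) := by
    intro s t hst
    have h1 : Tendsto (fun n => dist (g n s) (g n t)) 𝒰 (𝓝 (dist (γ s) (γ t))) :=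
      (hγ s).dist (hγ t)
    have h2 : Tendsto (fun n : ℕ => (c + 1/(n+1:ℝ)) * (t - s) + 1/(n+1:ℝ)) atTop
        (𝓝 (c * (t - s))) := by
      have hz : Tendsto (fun n : ℕ => 1/(n+1:ℝ)) atTop (𝓝 0) :=
        tendsto_one_div_add_atTop_nhds_zero_nat
      have := ((hz.const_add c).mul_const (t - s)).add hz
      simpa using this
    exact le_of_tendsto_of_tendsto' h1 (h2.mono_left h𝒰) (fun n => hgd n s t hst)
  have key : ∀ a b : ℝ, dist (γ a) (γ b) ≤ c * dist a b := by
    intro a b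
    rcases le_total a b with h | h
    · rw [Real.dist_eq, abs_sub_comm, abs_of_nonneg (sub_nonneg.2 h)]
      exact hlip a b h
    · rw [Real.dist_eq, abs_of_nonneg (sub_nonneg.2 h), dist_comm]
      exact hlip b a h
  have hlipW : LipschitzWith c.toNNReal γ :=
    LipschitzWith.of_dist_le_mul (fun a b => by
      rw [Real.coe_toNNReal c hc]; exact key a b)
  have hend0 : γ 0 = x := by
    have h2 : Tendsto (fun n => g n 0) 𝒰 (𝓝 x) := by
      simp only [hg0]; exact tendsto_const_nhds
    exact tendsto_nhds_unique (hγ 0) h2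
  have hend1 : γ 1 = y := by
    have h2 : Tendsto (fun n => g n 1) 𝒰 (𝓝 y) := by
      simp only [hg1]; exact tendsto_const_nhds
    exact tendsto_nhds_unique (hγ 1) h2
  have hvar : eVariationOn γ (Set.Icc 0 1) ≤ ENNReal.ofReal c := by
    have hcomp := LipschitzOnWith.comp_eVariationOn_le (hlipW.lipschitzOnWith (s := Set.univ))
      (Set.mapsTo_univ (id : ℝ → ℝ) (Set.Icc 0 1))
    have hγid : γ ∘ (id : ℝ → ℝ) = γ := rfl
    rw [hγid] at hcomp
    have hid : eVariationOn (id : ℝ → ℝ) (Set.Icc 0 1) ≤ ENNReal.ofReal 1 := by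
      have hmono : MonotoneOn (id : ℝ → ℝ) (Set.Icc 0 1) := fun a _ b _ hab => hab
      have := hmono.eVariationOn_le (Set.left_mem_Icc.2 zero_le_one)
        (Set.right_mem_Icc.2 zero_le_one)
      simpa using this
    refine hcomp.trans ?_
    calc (c.toNNReal : ℝ≥0∞) * eVariationOn (id : ℝ → ℝ) (Set.Icc 0 1)
        ≤ (c.toNNReal : ℝ≥0∞) * ENNReal.ofReal 1 := mul_le_mul_right hid _
      _ = ENNReal.ofReal c := by
          rw [ENNReal.ofReal_one, mul_one, ENNReal.ofReal, ENNReal.coe_inj]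
  exact ⟨γ, hlipW.continuous.continuousOn, hend0, hend1, fun t _ => Set.mem_univ _, hvar⟩

lemma curve_of_chainDist_le (x y : X) {c β : ℝ} (hc : 0 ≤ c) (hβ : 0 < β)
    (K : Set X) (hK : IsCompact K) (hKball : ∀ w : X, dist x w ≤ c + β → w ∈ K)
    (h : ∀ ε > 0, chainDist ε x y ≤ ENNReal.ofReal c) :
    ∃ γ : ℝ → X, ConnectsInWithLength γ x y Set.univ (ENNReal.ofReal c) := by
  apply chains_to_curve x y c hc K hK
  intro n
  set η := min (1/(n+1:ℝ)) β with hηdef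
  have hη0 : 0 < η := lt_min (by positivity) hβ
  have hη1 : η ≤ 1/(n+1:ℝ) := min_le_left _ _
  have hηβ : η ≤ β := min_le_right _ _
  have hlt : chainDist η x y < ENNReal.ofReal (c + η) := by
    refine (h η hη0).trans_lt ?_
    rw [ENNReal.ofReal_add hc hη0.le]
    exact ENNReal.lt_add_right ENNReal.ofReal_ne_top
      (by simp [ENNReal.ofReal_eq_zero]; linarith)
  obtain ⟨k, z, hz0, hzk, hmesh, hsum⟩ := exists_chain_of_lt hlt
  have hSz0 : 0 ≤ ∑ i ∈ Finset.range k, dist (z i) (z (i + 1)) :=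
    Finset.sum_nonneg fun _ _ => dist_nonneg
  rw [ENNReal.ofReal_lt_ofReal_iff_of_nonneg hSz0] at hsum
  refine ⟨k, z, hz0, hzk, ?_, fun i hi => (hmesh i hi).trans hη1, by linarith⟩
  intro i hik
  refine hKball (z i) ?_
  have h1 : dist (z 0) (z i) ≤ ∑ m ∈ Finset.range (i - 0), dist (z (0 + m)) (z (0 + m + 1)) :=
    dist_le_sum_chain' z 0 i (Nat.zero_le _)
  simp only [Nat.sub_zero, Nat.zero_add] at h1
  have h2 : ∑ m ∈ Finset.range i, dist (z m) (z (m + 1)) ≤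
      ∑ m ∈ Finset.range k, dist (z m) (z (m + 1)) :=
    Finset.sum_le_sum_of_subset_of_nonneg (Finset.range_subset_range.2 hik) fun _ _ _ => dist_nonneg
  rw [← hz0]
  linarith

noncomputable def chainDistSup (x y : X) : ℝ≥0∞ := ⨆ n : ℕ, chainDist (1/(n+1)) x y

lemma chainDist_le_chainDistSup {ε : ℝ} (hε : 0 < ε) (x y : X) :
    chainDist ε x y ≤ chainDistSup x y := by
  obtain ⟨n, hn⟩ := exists_nat_one_div_lt hε
  exact (chainDist_anti hn.le x y).trans (le_iSup (fun n : ℕ => chainDist (1/(n+1)) x y) n)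

lemma chainDistSup_le {x y : X} {c : ℝ≥0∞} (h : ∀ ε > 0, chainDist ε x y ≤ c) :
    chainDistSup x y ≤ c :=
  iSup_le fun n => h _ (by positivity)

lemma chainDistSup_triangle (x y z : X) :
    chainDistSup x z ≤ chainDistSup x y + chainDistSup y z :=
  iSup_le fun n => (chainDist_triangle _ x y z).trans
    (add_le_add (le_iSup (fun n : ℕ => chainDist (1/(n+1)) x y) n)
      (le_iSup (fun n : ℕ => chainDist (1/(n+1)) y z) n))

lemma chainDistSup_comm (x y : X) : chainDistSup x y = chainDistSup y x := by
  unfold chainDistSup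
  exact iSup_congr fun n => chainDist_comm _ x y

lemma chainDistSup_self (x : X) : chainDistSup x x = 0 := by
  unfold chainDistSup
  simp [chainDist_self]

end AuxCurve
end AuxChain

/-- If `X` is locally compact and `μ` is locally doubling and supports a local
`p`-Poincaré inequality, then `X` is locally quasiconvex; if `X` is moreover proper and
connected, then `X` is semilocally quasiconvex. -/
theorem locally_and_semilocally_quasiconvex
    {X : Type*} [MetricSpace X] [MeasurableSpace X] [BorelSpace X] [LocallyCompactSpace X]
    (μ : Measure X) (hμ : BallsPosFinite μ) (p : ℝ) (hp : 1 ≤ p)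
    (hdbl : ∀ x0 : X, ∃ r0 : ℝ, 0 < r0 ∧ ∃ C : ℝ≥0, DoublingWithin μ x0 r0 C)
    (hPI : ∀ x0 : X, ∃ r0 : ℝ, 0 < r0 ∧ ∃ C : ℝ, 0 < C ∧ ∃ lam : ℝ, 1 ≤ lam ∧
      PoincareWithin μ 1 p x0 r0 C lam) :
    (∀ x0 : X, ∃ r0 : ℝ, 0 < r0 ∧ ∃ L : ℝ, 0 < L ∧
      ∀ x ∈ ball x0 r0, ∀ y ∈ ball x0 r0, ∃ γ : ℝ → X,
        ConnectsInWithLength γ x y Set.univ (ENNReal.ofReal (L * dist x y))) ∧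
    (ProperSpace X → ConnectedSpace X →
      ∀ (x0 : X) (r0 : ℝ), 0 < r0 → ∃ L : ℝ, 0 < L ∧
        ∀ x ∈ ball x0 r0, ∀ y ∈ ball x0 r0, ∃ γ : ℝ → X,
          ConnectsInWithLength γ x y Set.univ (ENNReal.ofReal (L * dist x y))) := by
  have hloc : ∀ z : X, ∃ s L : ℝ, 0 < s ∧ 0 < L ∧ ∀ ε > 0, ∀ a ∈ ball z s, ∀ b ∈ ball z s,
      chainDist ε a b ≤ ENNReal.ofReal (L * dist a b) := by
    intro z
    obtain ⟨r1, hr1, Dc, hD⟩ := hdbl z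
    obtain ⟨r2, hr2, C, hC, lam, hlam, hPIz⟩ := hPI z
    exact chainDist_le_mul_dist μ hμ hp z hr1 hD hr2 hC hlam hPIz
  constructor
  · -- local quasiconvexity
    intro x0
    obtain ⟨s, L, hs, hL, hchain⟩ := hloc x0
    obtain ⟨t, ht, hKc⟩ := exists_isCompact_closedBall x0
    set r0 := min s (t / (4 * (L + 1))) with hr0def
    have hr00 : 0 < r0 := lt_min hs (by positivity)
    refine ⟨r0, hr00, L, hL, ?_⟩
    intro x hx y hy
    have hxs : x ∈ ball x0 s := ball_subset_ball (min_le_left _ _) hx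
    have hys : y ∈ ball x0 s := ball_subset_ball (min_le_left _ _) hy
    have hc : 0 ≤ L * dist x y := by positivity
    have hβ : (0:ℝ) < t / 4 := by positivity
    refine curve_of_chainDist_le x y hc hβ (closedBall x0 t) hKc ?_ ?_
    · intro w hw
      rw [mem_closedBall]
      have hxx0 : dist x x0 < r0 := mem_ball.1 hx
      have hxy2 : dist x y < 2 * r0 := by
        have h1 : dist x x0 < r0 := mem_ball.1 hx
        have h2 : dist y x0 < r0 := mem_ball.1 hy
        calc dist x y ≤ dist x x0 + dist x0 y := dist_triangle _ _ _
          _ = dist x x0 + dist y x0 := by rw [dist_comm x0 y]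
          _ < r0 + r0 := add_lt_add h1 h2
          _ = 2 * r0 := by ring
      have hr0t : r0 ≤ t / (4 * (L + 1)) := min_le_right _ _
      have h1 : L * dist x y ≤ L * (2 * r0) := mul_le_mul_of_nonneg_left hxy2.le hL.le
      have h2 : r0 * (2 * L + 1) ≤ (t / (4 * (L + 1))) * (2 * L + 1) :=
        mul_le_mul_of_nonneg_right hr0t (by positivity)
      have h3 : (t / (4 * (L + 1))) * (2 * L + 1) ≤ t / 2 := by
        rw [div_mul_eq_mul_div, div_le_div_iff₀ (by positivity) two_pos]
        nlinarith [ht.le, hL.le]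
      calc dist w x0 ≤ dist w x + dist x x0 := dist_triangle _ _ _
        _ = dist x w + dist x x0 := by rw [dist_comm w x]
        _ ≤ (L * dist x y + t / 4) + r0 := add_le_add hw hxx0.le
        _ ≤ t := by nlinarith
    · intro ε hε
      exact hchain ε hε x hxs y hys
  · -- semilocal quasiconvexity
    intro hProper hConn x0 r0 hr0
    choose sf Lf hsf hLf hchain using hloc
    have hDloc : ∀ z : X, ∀ a ∈ ball z (sf z), ∀ b ∈ ball z (sf z),
        chainDistSup a b ≤ ENNReal.ofReal (Lf z * dist a b) := by
      intro z a ha b hb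
      exact chainDistSup_le (fun ε hε => hchain z ε hε a ha b hb)
    have hfin : ∀ w : X, chainDistSup x0 w ≠ ⊤ := by
      set E := {w : X | chainDistSup x0 w ≠ ⊤} with hE
      have hopen : IsOpen E := by
        rw [Metric.isOpen_iff]
        intro w hw
        refine ⟨sf w, hsf w, fun v hv => ?_⟩
        have h1 : chainDistSup x0 v ≤ chainDistSup x0 w + chainDistSup w v :=
          chainDistSup_triangle _ _ _
        have h2 : chainDistSup w v ≤ ENNReal.ofReal (Lf w * dist w v) :=
          hDloc w w (mem_ball_self (hsf w)) v hv
        simp only [hE, mem_setOf_eq] at hw ⊢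
        exact ne_top_of_le_ne_top
          (ENNReal.add_ne_top.2 ⟨hw, ne_top_of_le_ne_top ENNReal.ofReal_ne_top h2⟩) h1
      have hopenc : IsOpen Eᶜ := by
        rw [Metric.isOpen_iff]
        intro w hw
        refine ⟨sf w, hsf w, fun v hv => ?_⟩
        simp only [hE, mem_compl_iff, mem_setOf_eq, not_not] at hw ⊢
        by_contra hvE
        have h1 : chainDistSup x0 w ≤ chainDistSup x0 v + chainDistSup v w :=
          chainDistSup_triangle _ _ _
        have h2 : chainDistSup v w ≤ ENNReal.ofReal (Lf w * dist v w) :=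
          hDloc w v hv w (mem_ball_self (hsf w))
        exact (ne_top_of_le_ne_top
          (ENNReal.add_ne_top.2 ⟨hvE, ne_top_of_le_ne_top ENNReal.ofReal_ne_top h2⟩) h1) hw
      have hclopen : IsClopen E := ⟨isOpen_compl_iff.1 hopenc, hopen⟩
      have hEne : E.Nonempty := ⟨x0, by simp [hE, chainDistSup_self]⟩
      have hEuniv := hclopen.eq_univ hEne
      intro w
      have : w ∈ E := hEuniv ▸ mem_univ w
      exact this
    haveI : ProperSpace X := hProper
    haveI : ConnectedSpace X := hConn
    have hKc : IsCompact (closedBall x0 r0) := isCompact_closedBall _ _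
    have hcover : closedBall x0 r0 ⊆ ⋃ w ∈ closedBall x0 r0, ball w (sf w / 2) := by
      intro v hv
      exact mem_biUnion hv (mem_ball_self (half_pos (hsf v)))
    obtain ⟨b, hbsub, hbfin, hbcover⟩ := hKc.elim_finite_subcover_image
      (fun w _ => isOpen_ball) hcover
    have hx0K : x0 ∈ closedBall x0 r0 := mem_closedBall_self hr0.le
    classical
    set F := hbfin.toFinset with hF
    have hFne : F.Nonempty := by
      obtain ⟨U, hU⟩ := mem_iUnion.1 (hbcover hx0K)
      obtain ⟨hUb, -⟩ := mem_iUnion.1 hU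
      exact ⟨U, hbfin.mem_toFinset.2 hUb⟩
    set T : ℝ≥0∞ := F.sup (fun w => chainDistSup x0 w + ENNReal.ofReal (Lf w * sf w)) with hT
    have hTfin : T ≠ ⊤ := by
      rw [← lt_top_iff_ne_top, Finset.sup_lt_iff (by simp : (⊥:ℝ≥0∞) < ⊤)]
      intro w _
      exact ENNReal.add_lt_top.2 ⟨(hfin w).lt_top, ENNReal.ofReal_lt_top⟩
    have hboundK : ∀ v ∈ closedBall x0 r0, chainDistSup x0 v ≤ T := by
      intro v hv
      obtain ⟨U, hU⟩ := mem_iUnion.1 (hbcover hv)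
      obtain ⟨hUb, hvU⟩ := mem_iUnion.1 hU
      have hwF : U ∈ F := hbfin.mem_toFinset.2 hUb
      have h1 := chainDistSup_triangle x0 U v
      have hvU' : v ∈ ball U (sf U) := ball_subset_ball (by linarith [hsf U]) hvU
      have h2 : chainDistSup U v ≤ ENNReal.ofReal (Lf U * dist U v) :=
        hDloc U U (mem_ball_self (hsf U)) v hvU'
      have h3 : ENNReal.ofReal (Lf U * dist U v) ≤ ENNReal.ofReal (Lf U * sf U) := by
        refine ENNReal.ofReal_le_ofReal (mul_le_mul_of_nonneg_left ?_ (hLf U).le)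
        rw [dist_comm]
        exact (mem_ball.1 hvU').le
      refine h1.trans (le_trans (add_le_add le_rfl (h2.trans h3)) ?_)
      exact Finset.le_sup (f := fun w => chainDistSup x0 w + ENNReal.ofReal (Lf w * sf w)) hwF
    set δ := F.inf' hFne (fun w => sf w / 2) with hδdef
    have hδ0 : 0 < δ := by
      rw [hδdef, Finset.lt_inf'_iff]
      intro w _
      exact half_pos (hsf w)
    set Λ := F.sup' hFne Lf with hΛdef
    have hΛ0 : 0 < Λ := by
      obtain ⟨w, hw⟩ := hFne
      exact lt_of_lt_of_le (hLf w) (Finset.le_sup' Lf hw)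
    set L2 := max Λ ((2 * T.toReal) / δ) + 1 with hL2def
    have hL20 : 0 < L2 := by
      have h := le_max_left Λ ((2 * T.toReal) / δ)
      rw [hL2def]; linarith
    refine ⟨L2, hL20, ?_⟩
    intro x hx y hy
    have hxK : x ∈ closedBall x0 r0 := ball_subset_closedBall hx
    have hyK : y ∈ closedBall x0 r0 := ball_subset_closedBall hy
    have hcds : chainDistSup x y ≤ ENNReal.ofReal (L2 * dist x y) := by
      rcases lt_or_ge (dist x y) δ with hsmall | hbig
      · obtain ⟨U, hU⟩ := mem_iUnion.1 (hbcover hxK)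
        obtain ⟨hUb, hxU⟩ := mem_iUnion.1 hU
        have hwF : U ∈ F := hbfin.mem_toFinset.2 hUb
        have hδU : δ ≤ sf U / 2 := Finset.inf'_le _ hwF
        have hyU : y ∈ ball U (sf U) := by
          rw [mem_ball]
          have h1 : dist x U < sf U / 2 := mem_ball.1 hxU
          calc dist y U ≤ dist y x + dist x U := dist_triangle _ _ _
            _ < δ + sf U / 2 := by
                rw [dist_comm y x]
                exact add_lt_add hsmall h1
            _ ≤ sf U := by linarith
        have hxU' : x ∈ ball U (sf U) := ball_subset_ball (by linarith [hsf U]) hxU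
        refine (hDloc U x hxU' y hyU).trans (ENNReal.ofReal_le_ofReal ?_)
        have hΛle : Lf U ≤ Λ := Finset.le_sup' Lf hwF
        have hΛL2 : Λ ≤ L2 := by
          have h := le_max_left Λ ((2 * T.toReal) / δ)
          rw [hL2def]; linarith
        exact mul_le_mul_of_nonneg_right (hΛle.trans hΛL2) dist_nonneg
      · have h1 : chainDistSup x y ≤ T + T := by
          have h := chainDistSup_triangle x x0 y
          rw [chainDistSup_comm x x0] at h
          exact h.trans (add_le_add (hboundK x hxK) (hboundK y hyK))
        have hTT : T + T = ENNReal.ofReal (2 * T.toReal) := by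
          conv_lhs => rw [← ENNReal.ofReal_toReal hTfin]
          rw [← ENNReal.ofReal_add ENNReal.toReal_nonneg ENNReal.toReal_nonneg]
          congr 1
          ring
        rw [hTT] at h1
        refine h1.trans (ENNReal.ofReal_le_ofReal ?_)
        have h2 : (2 * T.toReal) / δ ≤ L2 := by
          have h := le_max_right Λ ((2 * T.toReal) / δ)
          rw [hL2def]; linarith
        have h3 : 2 * T.toReal = ((2 * T.toReal) / δ) * δ := by field_simp
        calc 2 * T.toReal = ((2 * T.toReal) / δ) * δ := h3
          _ ≤ L2 * δ := mul_le_mul_of_nonneg_right h2 hδ0.le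
          _ ≤ L2 * dist x y := mul_le_mul_of_nonneg_left hbig hL20.le
    have hc : 0 ≤ L2 * dist x y := by positivity
    refine curve_of_chainDist_le x y hc one_pos (closedBall x (L2 * dist x y + 1))
      (isCompact_closedBall _ _) (fun w hw => by rw [mem_closedBall, dist_comm]; exact hw) ?_
    intro ε hε
    exact (chainDist_le_chainDistSup hε x y).trans hcds
end

section
/- Let 1 ≤ q < ∞ and let A, E ⊆ X be measurable sets of finite positive measure such that μ(A ∩ E) ≥ θ μ(E) > 0 for some θ > 0. Assume that u ∈ L^q(A ∪ E) and that for some Q ≥ 0, ‖u − u_A‖_{L^q(A)} ≤ Q and ‖u − u_E‖_{L^q(E)} ≤ Q. Then ‖u − u_{A∪E}‖_{L^q(A∪E)} ≤ 4(1 + θ^{−1/q}) Q. -/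
open MeasureTheory Metric Set ENNReal NNReal Filter

section Helpers

variable {Y : Type*} [MeasurableSpace Y] {μ : Measure Y}

/-- Power-mean / Hölder inequality for a single function. -/
lemma glue_holder {q : ℝ} (hq1 : 1 ≤ q) {S : Set Y} (f : Y → ℝ≥0∞)
    (hf : AEMeasurable f (μ.restrict S)) :
    ∫⁻ x in S, f x ∂μ ≤ (∫⁻ x in S, f x ^ q ∂μ) ^ (1/q) * (μ S) ^ (1 - 1/q) := by
  rcases eq_or_lt_of_le hq1 with h | h
  · subst h
    simp
  · have hpq : q.HolderConjugate (Real.conjExponent q) := Real.HolderConjugate.conjExponent h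
    have h0 : q ≠ 0 := hpq.ne_zero
    have hconj : 1 / Real.conjExponent q = 1 - 1/q := by
      rw [Real.conjExponent]
      field_simp
    have H := ENNReal.lintegral_mul_le_Lp_mul_Lq (μ.restrict S) hpq hf
      (aemeasurable_const (b := (1:ℝ≥0∞)))
    simp only [Pi.mul_apply, mul_one, ENNReal.one_rpow, lintegral_one,
      Measure.restrict_apply_univ] at H
    rwa [hconj] at H
/-- Bound on the deviation of the mean from a constant. -/
lemma glue_mean_bound {q : ℝ} (hq1 : 1 ≤ q) {S : Set Y} (hS0 : 0 < μ S) (hSfin : μ S < ⊤)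
    {u : Y → ℝ} (hint : IntegrableOn u S μ) (c : ℝ) :
    ENNReal.ofReal |(⨍ z in S, u z ∂μ) - c| * (μ S) ^ (1/q)
      ≤ (∫⁻ x in S, ENNReal.ofReal |u x - c| ^ q ∂μ) ^ (1/q) := by
  have hq0 : (0:ℝ) < q := lt_of_lt_of_le zero_lt_one hq1
  have htR : 0 < (μ S).toReal := ENNReal.toReal_pos hS0.ne' hSfin.ne
  have hcint : IntegrableOn (fun _ => c) S μ := integrableOn_const hSfin.ne
  have hsubint : IntegrableOn (fun x => u x - c) S μ := hint.sub hcint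
  have habsint : IntegrableOn (fun x => |u x - c|) S μ := hsubint.abs
  -- Step A : |mean - c| ≤ (μ S).toReal⁻¹ * ∫ |u - c|
  have h1 : (⨍ z in S, u z ∂μ) - c = (μ S).toReal⁻¹ * ∫ x in S, (u x - c) ∂μ := by
    rw [setAverage_eq, integral_sub hint hcint, setIntegral_const, smul_eq_mul, smul_eq_mul]
    simp only [measureReal_def]
    field_simp
  have habs : |(⨍ z in S, u z ∂μ) - c| ≤ (μ S).toReal⁻¹ * ∫ x in S, |u x - c| ∂μ := by
    rw [h1, abs_mul, abs_of_nonneg (inv_nonneg.2 ENNReal.toReal_nonneg)]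
    gcongr
    calc |∫ x in S, (u x - c) ∂μ| = ‖∫ x in S, (u x - c) ∂μ‖ := (Real.norm_eq_abs _).symm
      _ ≤ ∫ x in S, ‖u x - c‖ ∂μ := norm_integral_le_integral_norm _
      _ = ∫ x in S, |u x - c| ∂μ := by simp [Real.norm_eq_abs]
  -- Step B : pass to lintegrals
  have hBm : ENNReal.ofReal (∫ x in S, |u x - c| ∂μ)
      = ∫⁻ x in S, ENNReal.ofReal |u x - c| ∂μ :=
    MeasureTheory.ofReal_integral_eq_lintegral_ofReal habsint (Filter.Eventually.of_forall
      fun x => abs_nonneg _)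
  have hinv : ENNReal.ofReal (μ S).toReal⁻¹ = (μ S)⁻¹ := by
    rw [ENNReal.ofReal_inv_of_pos htR, ENNReal.ofReal_toReal hSfin.ne]
  have hB : ENNReal.ofReal |(⨍ z in S, u z ∂μ) - c|
      ≤ (μ S)⁻¹ * ∫⁻ x in S, ENNReal.ofReal |u x - c| ∂μ := by
    calc ENNReal.ofReal |(⨍ z in S, u z ∂μ) - c|
        ≤ ENNReal.ofReal ((μ S).toReal⁻¹ * ∫ x in S, |u x - c| ∂μ) :=
          ENNReal.ofReal_le_ofReal habs
      _ = ENNReal.ofReal (μ S).toReal⁻¹ * ENNReal.ofReal (∫ x in S, |u x - c| ∂μ) :=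
          ENNReal.ofReal_mul (inv_nonneg.2 ENNReal.toReal_nonneg)
      _ = (μ S)⁻¹ * ∫⁻ x in S, ENNReal.ofReal |u x - c| ∂μ := by rw [hinv, hBm]
  -- Step C : Hölder
  have hmeas : AEMeasurable (fun x => ENNReal.ofReal |u x - c|) (μ.restrict S) :=
    habsint.aestronglyMeasurable.aemeasurable.ennreal_ofReal
  have hH := glue_holder hq1 (fun x => ENNReal.ofReal |u x - c|) hmeas
  calc ENNReal.ofReal |(⨍ z in S, u z ∂μ) - c| * (μ S) ^ (1/q)
      ≤ ((μ S)⁻¹ * ∫⁻ x in S, ENNReal.ofReal |u x - c| ∂μ) * (μ S) ^ (1/q) := by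
        gcongr
    _ ≤ ((μ S)⁻¹ * ((∫⁻ x in S, ENNReal.ofReal |u x - c| ^ q ∂μ) ^ (1/q)
          * (μ S) ^ (1 - 1/q))) * (μ S) ^ (1/q) := by gcongr
    _ = (∫⁻ x in S, ENNReal.ofReal |u x - c| ^ q ∂μ) ^ (1/q)
          * ((μ S)⁻¹ * ((μ S) ^ (1 - 1/q) * (μ S) ^ (1/q))) := by ring
    _ = (∫⁻ x in S, ENNReal.ofReal |u x - c| ^ q ∂μ) ^ (1/q) := by
        rw [← ENNReal.rpow_add _ _ hS0.ne' hSfin.ne]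
        norm_num
        rw [ENNReal.inv_mul_cancel hS0.ne' hSfin.ne, mul_one]
/-- Changing the constant in an `L^q` deviation. -/
lemma glue_triangle {q : ℝ} (hq1 : 1 ≤ q) {S : Set Y} {u : Y → ℝ}
    (hm : AEMeasurable u (μ.restrict S)) (c c' : ℝ) :
    (∫⁻ x in S, ENNReal.ofReal |u x - c| ^ q ∂μ) ^ (1/q)
      ≤ (∫⁻ x in S, ENNReal.ofReal |u x - c'| ^ q ∂μ) ^ (1/q)
        + ENNReal.ofReal |c' - c| * (μ S) ^ (1/q) := by
  have hq0 : (0:ℝ) < q := lt_of_lt_of_le zero_lt_one hq1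
  have hf : AEMeasurable (fun x => ENNReal.ofReal |u x - c'|) (μ.restrict S) := by
    simpa only [Real.norm_eq_abs, Pi.sub_apply] using ((hm.sub aemeasurable_const).norm).ennreal_ofReal
  have key : ∀ x, ENNReal.ofReal |u x - c| ≤ ENNReal.ofReal |u x - c'| + ENNReal.ofReal |c' - c| := by
    intro x
    rw [← ENNReal.ofReal_add (abs_nonneg _) (abs_nonneg _)]
    exact ENNReal.ofReal_le_ofReal (abs_sub_le (u x) c' c)
  calc (∫⁻ x in S, ENNReal.ofReal |u x - c| ^ q ∂μ) ^ (1/q)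
      ≤ (∫⁻ x in S, (ENNReal.ofReal |u x - c'| + ENNReal.ofReal |c' - c|) ^ q ∂μ) ^ (1/q) :=
        ENNReal.rpow_le_rpow
          (lintegral_mono fun x => ENNReal.rpow_le_rpow (key x) hq0.le) (by positivity)
    _ ≤ (∫⁻ x in S, ENNReal.ofReal |u x - c'| ^ q ∂μ) ^ (1/q)
          + (∫⁻ x in S, ENNReal.ofReal |c' - c| ^ q ∂μ) ^ (1/q) :=
        ENNReal.lintegral_Lp_add_le hf aemeasurable_const hq1
    _ = (∫⁻ x in S, ENNReal.ofReal |u x - c'| ^ q ∂μ) ^ (1/q)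
          + ENNReal.ofReal |c' - c| * (μ S) ^ (1/q) := by
        rw [setLIntegral_const, ENNReal.mul_rpow_of_nonneg _ _ (by positivity),
          ← ENNReal.rpow_mul, mul_one_div_cancel hq0.ne', ENNReal.rpow_one]
/-- Splitting an `L^q` deviation over a union. -/
lemma glue_union {q : ℝ} (hq1 : 1 ≤ q) {A E : Set Y} (u : Y → ℝ) (c : ℝ) :
    (∫⁻ x in A ∪ E, ENNReal.ofReal |u x - c| ^ q ∂μ) ^ (1/q)
      ≤ (∫⁻ x in A, ENNReal.ofReal |u x - c| ^ q ∂μ) ^ (1/q)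
        + (∫⁻ x in E, ENNReal.ofReal |u x - c| ^ q ∂μ) ^ (1/q) := by
  have hq0 : (0:ℝ) < q := lt_of_lt_of_le zero_lt_one hq1
  set IA := ∫⁻ x in A, ENNReal.ofReal |u x - c| ^ q ∂μ
  set IE := ∫⁻ x in E, ENNReal.ofReal |u x - c| ^ q ∂μ
  have h1 : (∫⁻ x in A ∪ E, ENNReal.ofReal |u x - c| ^ q ∂μ) ^ (1/q)
      ≤ (IA + IE) ^ (1/q) :=
    ENNReal.rpow_le_rpow (lintegral_union_le _ _ _) (by positivity)
  refine h1.trans ?_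
  have hA : IA = (IA ^ (1/q)) ^ q := by
    rw [← ENNReal.rpow_mul, one_div_mul_cancel hq0.ne', ENNReal.rpow_one]
  have hE : IE = (IE ^ (1/q)) ^ q := by
    rw [← ENNReal.rpow_mul, one_div_mul_cancel hq0.ne', ENNReal.rpow_one]
  calc (IA + IE) ^ (1/q) = ((IA ^ (1/q)) ^ q + (IE ^ (1/q)) ^ q) ^ (1/q) := by
        rw [← hA, ← hE]
    _ ≤ IA ^ (1/q) + IE ^ (1/q) := ENNReal.rpow_add_rpow_le_add _ _ hq1

end Helpers

/-- glueing lemma for `L^q`-deviations from means: if `μ(A ∩ E) ≥ θ μ(E) > 0`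
and `‖u − u_A‖_{L^q(A)} ≤ Q`, `‖u − u_E‖_{L^q(E)} ≤ Q`, then
`‖u − u_{A∪E}‖_{L^q(A∪E)} ≤ 4(1 + θ^{-1/q}) Q`. -/
theorem glueing_lemma_for_means
    {X : Type*} [MetricSpace X] [MeasurableSpace X] [BorelSpace X]
    (μ : Measure X) (q : ℝ) (hq1 : 1 ≤ q)
    (A E : Set X) (hA : MeasurableSet A) (hE : MeasurableSet E)
    (hA0 : 0 < μ A) (hAfin : μ A < ⊤) (hE0 : 0 < μ E) (hEfin : μ E < ⊤)
    (θ : ℝ) (hθ : 0 < θ)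
    (hover : ENNReal.ofReal θ * μ E ≤ μ (A ∩ E))
    (u : X → ℝ) (hu : MemLp u (ENNReal.ofReal q) (μ.restrict (A ∪ E)))
    (Q : ℝ) (hQ : 0 ≤ Q)
    (hQA : (∫⁻ x in A, ENNReal.ofReal |u x - ⨍ z in A, u z ∂μ| ^ q ∂μ) ^ (1/q)
      ≤ ENNReal.ofReal Q)
    (hQE : (∫⁻ x in E, ENNReal.ofReal |u x - ⨍ z in E, u z ∂μ| ^ q ∂μ) ^ (1/q)
      ≤ ENNReal.ofReal Q) :
    (∫⁻ x in A ∪ E, ENNReal.ofReal |u x - ⨍ z in A ∪ E, u z ∂μ| ^ q ∂μ) ^ (1/q)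
      ≤ ENNReal.ofReal (4 * (1 + θ ^ (-1/q)) * Q) := by
  have hq0 : (0:ℝ) < q := lt_of_lt_of_le zero_lt_one hq1
  set a := ⨍ z in A, u z ∂μ with ha
  set e := ⨍ z in E, u z ∂μ with he
  set m := ⨍ z in A ∪ E, u z ∂μ with hm
  have hUfin : μ (A ∪ E) < ⊤ :=
    (measure_union_le A E).trans_lt (ENNReal.add_lt_top.2 ⟨hAfin, hEfin⟩)
  have hU0 : 0 < μ (A ∪ E) := hA0.trans_le (measure_mono subset_union_left)
  haveI : IsFiniteMeasure (μ.restrict (A ∪ E)) :=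
    ⟨by simpa [Measure.restrict_apply_univ] using hUfin⟩
  have huInt : IntegrableOn u (A ∪ E) μ :=
    hu.integrable (ENNReal.one_le_ofReal.2 hq1)
  have huA : IntegrableOn u A μ := huInt.mono_set subset_union_left
  have huE : IntegrableOn u E μ := huInt.mono_set subset_union_right
  have huAE : IntegrableOn u (A ∩ E) μ :=
    huInt.mono_set (inter_subset_left.trans subset_union_left)
  have hmU : AEMeasurable u (μ.restrict (A ∪ E)) :=
    hu.aestronglyMeasurable.aemeasurable
  have hmE : AEMeasurable u (μ.restrict E) :=
    hmU.mono_measure (Measure.restrict_mono subset_union_right le_rfl)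
  have hAE0 : 0 < μ (A ∩ E) :=
    lt_of_lt_of_le (ENNReal.mul_pos (ENNReal.ofReal_pos.2 hθ).ne' hE0.ne') hover
  have hAEfin : μ (A ∩ E) < ⊤ := lt_of_le_of_lt (measure_mono inter_subset_left) hAfin
  -- notation for L^q deviations
  set w := ⨍ z in A ∩ E, u z ∂μ with hw
  -- deviation over A ∩ E bounded by deviations over A, over E
  have hIAa : (∫⁻ x in A ∩ E, ENNReal.ofReal |u x - a| ^ q ∂μ) ^ (1/q)
      ≤ (∫⁻ x in A, ENNReal.ofReal |u x - a| ^ q ∂μ) ^ (1/q) :=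
    ENNReal.rpow_le_rpow (lintegral_mono_set inter_subset_left) (by positivity)
  have hIEe : (∫⁻ x in A ∩ E, ENNReal.ofReal |u x - e| ^ q ∂μ) ^ (1/q)
      ≤ (∫⁻ x in E, ENNReal.ofReal |u x - e| ^ q ∂μ) ^ (1/q) :=
    ENNReal.rpow_le_rpow (lintegral_mono_set inter_subset_right) (by positivity)
  have hma : ENNReal.ofReal |w - a| * (μ (A ∩ E)) ^ (1/q) ≤ ENNReal.ofReal Q :=
    (glue_mean_bound hq1 hAE0 hAEfin huAE a).trans (hIAa.trans hQA)
  have hme : ENNReal.ofReal |w - e| * (μ (A ∩ E)) ^ (1/q) ≤ ENNReal.ofReal Q :=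
    (glue_mean_bound hq1 hAE0 hAEfin huAE e).trans (hIEe.trans hQE)
  -- |e - a| estimate on A ∩ E
  have hea : ENNReal.ofReal |e - a| * (μ (A ∩ E)) ^ (1/q)
      ≤ ENNReal.ofReal Q + ENNReal.ofReal Q := by
    have habs : |e - a| ≤ |w - a| + |w - e| := by
      have h := abs_sub_le e w a
      rw [abs_sub_comm e w] at h
      linarith
    calc ENNReal.ofReal |e - a| * (μ (A ∩ E)) ^ (1/q)
        ≤ (ENNReal.ofReal |w - a| + ENNReal.ofReal |w - e|) * (μ (A ∩ E)) ^ (1/q) := by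
          refine mul_le_mul_left ?_ _
          rw [← ENNReal.ofReal_add (abs_nonneg _) (abs_nonneg _)]
          exact ENNReal.ofReal_le_ofReal habs
      _ = ENNReal.ofReal |w - a| * (μ (A ∩ E)) ^ (1/q)
            + ENNReal.ofReal |w - e| * (μ (A ∩ E)) ^ (1/q) := add_mul _ _ _
      _ ≤ ENNReal.ofReal Q + ENNReal.ofReal Q := add_le_add hma hme
  -- measure comparison
  have ht : (0:ℝ) < θ ^ (-1/q) := Real.rpow_pos_of_pos hθ _
  have hmeasE : (μ E) ^ (1/q)
      ≤ ENNReal.ofReal (θ ^ (-1/q)) * (μ (A ∩ E)) ^ (1/q) := by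
    have h1 : μ E ≤ ENNReal.ofReal θ⁻¹ * μ (A ∩ E) := by
      have h2 := mul_le_mul_right hover (ENNReal.ofReal θ⁻¹)
      rwa [← mul_assoc, ← ENNReal.ofReal_mul (inv_nonneg.2 hθ.le),
        inv_mul_cancel₀ hθ.ne', ENNReal.ofReal_one, one_mul] at h2
    have h3 : (μ E) ^ (1/q) ≤ (ENNReal.ofReal θ⁻¹ * μ (A ∩ E)) ^ (1/q) :=
      ENNReal.rpow_le_rpow h1 (by positivity)
    rw [ENNReal.mul_rpow_of_nonneg _ _ (by positivity)] at h3
    have h4 : (ENNReal.ofReal θ⁻¹) ^ (1/q) = ENNReal.ofReal (θ ^ (-1/q)) := by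
      rw [ENNReal.ofReal_rpow_of_pos (inv_pos.2 hθ), Real.inv_rpow hθ.le,
        ← Real.rpow_neg hθ.le, neg_div]
    rwa [h4] at h3
  have hea' : ENNReal.ofReal |e - a| * (μ E) ^ (1/q)
      ≤ ENNReal.ofReal (θ ^ (-1/q)) * (ENNReal.ofReal Q + ENNReal.ofReal Q) := by
    calc ENNReal.ofReal |e - a| * (μ E) ^ (1/q)
        ≤ ENNReal.ofReal |e - a| * (ENNReal.ofReal (θ ^ (-1/q)) * (μ (A ∩ E)) ^ (1/q)) :=
          mul_le_mul_right hmeasE _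
      _ = ENNReal.ofReal (θ ^ (-1/q)) * (ENNReal.ofReal |e - a| * (μ (A ∩ E)) ^ (1/q)) := by
          ring
      _ ≤ ENNReal.ofReal (θ ^ (-1/q)) * (ENNReal.ofReal Q + ENNReal.ofReal Q) :=
          mul_le_mul_right hea _
  -- deviation from a over E
  have hFaE : (∫⁻ x in E, ENNReal.ofReal |u x - a| ^ q ∂μ) ^ (1/q)
      ≤ ENNReal.ofReal Q
        + ENNReal.ofReal (θ ^ (-1/q)) * (ENNReal.ofReal Q + ENNReal.ofReal Q) := by
    calc (∫⁻ x in E, ENNReal.ofReal |u x - a| ^ q ∂μ) ^ (1/q)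
        ≤ (∫⁻ x in E, ENNReal.ofReal |u x - e| ^ q ∂μ) ^ (1/q)
            + ENNReal.ofReal |e - a| * (μ E) ^ (1/q) := glue_triangle hq1 hmE a e
      _ ≤ ENNReal.ofReal Q
            + ENNReal.ofReal (θ ^ (-1/q)) * (ENNReal.ofReal Q + ENNReal.ofReal Q) :=
          add_le_add hQE hea'
  -- deviation from a over A ∪ E
  set R := ENNReal.ofReal Q
      + (ENNReal.ofReal Q
        + ENNReal.ofReal (θ ^ (-1/q)) * (ENNReal.ofReal Q + ENNReal.ofReal Q)) with hR
  have hFaU : (∫⁻ x in A ∪ E, ENNReal.ofReal |u x - a| ^ q ∂μ) ^ (1/q) ≤ R :=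
    (glue_union hq1 u a).trans (add_le_add hQA hFaE)
  -- the mean over A ∪ E is close to a
  have hmaU : ENNReal.ofReal |a - m| * (μ (A ∪ E)) ^ (1/q) ≤ R := by
    have := glue_mean_bound (μ := μ) hq1 hU0 hUfin huInt a
    rw [abs_sub_comm]
    exact this.trans hFaU
  -- final combination
  calc (∫⁻ x in A ∪ E, ENNReal.ofReal |u x - m| ^ q ∂μ) ^ (1/q)
      ≤ (∫⁻ x in A ∪ E, ENNReal.ofReal |u x - a| ^ q ∂μ) ^ (1/q)
          + ENNReal.ofReal |a - m| * (μ (A ∪ E)) ^ (1/q) := glue_triangle hq1 hmU m a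
    _ ≤ R + R := add_le_add hFaU hmaU
    _ = ENNReal.ofReal (4 * (1 + θ ^ (-1/q)) * Q) := by
        rw [hR, show 4 * (1 + θ ^ (-1/q)) * Q
            = (Q + (Q + θ ^ (-1/q) * (Q + Q))) + (Q + (Q + θ ^ (-1/q) * (Q + Q))) by ring,
          ENNReal.ofReal_add (by positivity) (by positivity),
          ENNReal.ofReal_add hQ (by positivity),
          ENNReal.ofReal_add hQ (by positivity),
          ENNReal.ofReal_mul ht.le,
          ENNReal.ofReal_add hQ hQ]
end
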